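/- arXiv:2207.09937 — 10 statements merged into one kernel-verified Lean document; each statement's English description precedes it below -/
import Mathlib

section
/- If an infinite word x over a finite alphabet has the property that all factors of some fixed length n > 0 are abelian equivalent (i.e., its abelian complexity at n equals 1), then x is purely periodic with period n. -/
/-- The factor of the infinite word `x` of length `n` starting at position `i`. -/
def factorW {d : ℕ} (x : ℕ → Fin d) (i n : ℕ) : List (Fin d) :=
  (List.range n).map (fun j => x (i + j))

/-- Abelian equivalence: same number of occurrences of each letter. -/
def abelEq {α : Type*} [DecidableEq α] (u v : List α) : Prop :=
  ∀ a, u.count a = v.count a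

lemma factorW_cons {d : ℕ} (x : ℕ → Fin d) (i m : ℕ) :
    factorW x i (m + 1) = x i :: factorW x (i + 1) m := by
  simp [factorW, List.range_succ_eq_map, List.map_map, Function.comp,
    Nat.add_comm, Nat.add_assoc, Nat.add_left_comm]

lemma factorW_snoc {d : ℕ} (x : ℕ → Fin d) (i m : ℕ) :
    factorW x i (m + 1) = factorW x i m ++ [x (i + m)] := by
  simp [factorW, List.range_succ]

/-- If all factors of length `n > 0` of an infinite word are abelian equivalent,
then the word is purely periodic with period `n`. -/
theorem stmt0 {d : ℕ} (x : ℕ → Fin d) (n : ℕ) (hn : 0 < n)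
    (h : ∀ i j : ℕ, abelEq (factorW x i n) (factorW x j n)) :
    ∀ i, x (i + n) = x i := by
  intro i
  obtain ⟨m, rfl⟩ := Nat.exists_eq_succ_of_ne_zero hn.ne'
  have key := h i (i + 1) (x i)
  rw [factorW_cons, factorW_snoc] at key
  simp only [List.count_cons, List.count_append, List.count_singleton] at key
  by_contra hne
  have h1 : i + 1 + m = i + (m + 1) := by ring
  rw [h1] at key
  simp [hne, if_neg (Ne.symm hne)] at key
end

section
/- An infinite word x over a finite alphabet has bounded abelian complexity if and only if x is C-balanced for some positive integer C. -/
/-- The abelian complexity of `x` at `n`: the number of distinct Parikh vectors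
of factors of `x` of length `n`. -/
noncomputable def abComplexity {d : ℕ} (x : ℕ → Fin d) (n : ℕ) : ℕ :=
  Set.ncard {p : Fin d → ℕ | ∃ i, ∀ a, (factorW x i n).count a = p a}

lemma factorW_length {d : ℕ} (x : ℕ → Fin d) (i n : ℕ) : (factorW x i n).length = n := by
  simp [factorW]

lemma factor_step {d : ℕ} (x : ℕ → Fin d) (a : Fin d) (n k : ℕ) :
    (((factorW x (k+1) n).count a : ℤ) - ((factorW x k n).count a : ℤ)).natAbs ≤ 1 := by
  have h1 : factorW x k (n+1) = factorW x k n ++ [x (k+n)] := by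
    simp [factorW, List.range_succ]
  have h2 : factorW x k (n+1) = x k :: factorW x (k+1) n := by
    simp only [factorW, List.range_succ_eq_map, List.map_cons, List.map_map, Nat.add_zero]
    congr 1
    · ext j
      simp [Function.comp, Nat.succ_eq_add_one]
      ring_nf
  have h3 := congrArg (List.count a) (h1.symm.trans h2)
  simp only [List.count_append, List.count_cons, List.count_nil] at h3
  split_ifs at h3 <;> omega

/-- Discrete intermediate value theorem, increasing indices. -/
lemma ivt_aux (g : ℕ → ℤ) (hg : ∀ k, (g (k+1) - g k).natAbs ≤ 1) :
    ∀ (m i : ℕ) (v : ℤ), g i ≤ v → v ≤ g (i + m) → ∃ k, g k = v := by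
  intro m
  induction m with
  | zero => intro i v h1 h2; exact ⟨i, le_antisymm h1 h2⟩
  | succ m ih =>
    intro i v h1 h2
    by_cases h : v ≤ g (i + m)
    · exact ih i v h1 h
    · refine ⟨i + m + 1, ?_⟩
      have e : i + (m + 1) = (i + m) + 1 := rfl
      rw [e] at h2
      have := hg (i + m)
      omega

lemma ivt (g : ℕ → ℤ) (hg : ∀ k, (g (k+1) - g k).natAbs ≤ 1)
    (i j : ℕ) (v : ℤ) (h1 : g i ≤ v) (h2 : v ≤ g j) : ∃ k, g k = v := by
  rcases le_total i j with hij | hij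
  · have e : i + (j - i) = j := by omega
    exact ivt_aux g hg (j - i) i v h1 (by rw [e]; exact h2)
  · have hg' : ∀ k, ((-g (k+1)) - (-g k)).natAbs ≤ 1 := by
      intro k; have := hg k; omega
    have e : j + (i - j) = i := by omega
    obtain ⟨k, hk⟩ := ivt_aux (fun k => -g k) hg' (i - j) j (-v)
      (by simpa using h2) (by simp only [e]; simpa using h1)
    exact ⟨k, by simpa using hk⟩

/-- An infinite word has bounded abelian complexity iff it is `C`-balanced for some
positive integer `C` (for every letter, the numbers of its occurrences in any two
factors of the same length differ by at most `C`). -/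
theorem stmt2 {d : ℕ} (x : ℕ → Fin d) :
    (∃ M : ℕ, ∀ n, abComplexity x n ≤ M) ↔
      (∃ C : ℕ, 0 < C ∧ ∀ (a : Fin d) (i j n : ℕ),
        (((factorW x i n).count a : ℤ) - ((factorW x j n).count a : ℤ)).natAbs ≤ C) := by
  constructor
  · rintro ⟨M, hM⟩
    refine ⟨M + 1, Nat.succ_pos _, ?_⟩
    intro a i j n
    set S : Set (Fin d → ℕ) := {p : Fin d → ℕ | ∃ i, ∀ a, (factorW x i n).count a = p a} with hS
    have hfin : S.Finite := by
      have hsub : S ⊆ Set.univ.pi (fun _ : Fin d => Set.Iic n) := by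
        rintro p ⟨k, hk⟩ b _
        simp only [Set.mem_Iic]
        rw [← hk b]
        calc (factorW x k n).count b ≤ (factorW x k n).length := List.count_le_length
          _ = n := factorW_length x k n
      exact (Set.Finite.pi (fun _ => Set.finite_Iic n)).subset hsub
    haveI := hfin.to_subtype
    set f : ℕ → ℤ := fun k => ((factorW x k n).count a : ℤ) with hf
    have hstep : ∀ k, (f (k+1) - f k).natAbs ≤ 1 := fun k => factor_step x a n k
    set N : ℕ := (f i - f j).natAbs with hN
    -- for each t ≤ N, the value min (f i) (f j) + t is attained
    have hattain : ∀ t : Fin (N + 1), ∃ k, f k = min (f i) (f j) + (t : ℤ) := by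
      intro t
      have ht : (t : ℤ) ≤ (N : ℤ) := by exact_mod_cast Nat.lt_succ_iff.mp t.isLt
      have ht0 : (0 : ℤ) ≤ (t : ℤ) := Int.natCast_nonneg _
      rcases le_total (f i) (f j) with h | h
      · exact ivt f hstep i j _ (by omega) (by simp [min_eq_left h]; omega)
      · exact ivt f hstep j i _ (by omega) (by simp [min_eq_right h]; omega)
    set φ : Fin (N + 1) → S := fun t =>
      ⟨fun b => (factorW x (hattain t).choose n).count b, ⟨(hattain t).choose, fun b => rfl⟩⟩
      with hφ
    have hinj : Function.Injective φ := by
      intro t s hts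
      have h1 := congrFun (congrArg Subtype.val hts) a
      simp only [hφ] at h1
      have h2 : f (hattain t).choose = f (hattain s).choose := by
        simp only [hf]
        exact congrArg (fun m : ℕ => (m : ℤ)) h1
      rw [(hattain t).choose_spec, (hattain s).choose_spec] at h2
      have : (t : ℤ) = (s : ℤ) := by omega
      exact Fin.ext (by exact_mod_cast this)
    have hle := Nat.card_le_card_of_injective φ hinj
    rw [Nat.card_eq_fintype_card, Fintype.card_fin, Nat.card_coe_set_eq] at hle
    have hcomp : S.ncard ≤ M := hM n
    omega
  · rintro ⟨C, hC, hbal⟩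
    refine ⟨(2 * C + 1) ^ d, fun n => ?_⟩
    set S : Set (Fin d → ℕ) := {p : Fin d → ℕ | ∃ i, ∀ a, (factorW x i n).count a = p a} with hS
    have key : ∀ p : S, ∀ b : Fin d,
        p.1 b + C < (factorW x 0 n).count b + (2 * C + 1) ∧ (factorW x 0 n).count b ≤ p.1 b + C := by
      rintro ⟨p, k, hk⟩ b
      have := hbal b k 0 n
      have hpb := hk b
      simp only at hpb ⊢
      omega
    set φ : S → (Fin d → Fin (2 * C + 1)) := fun p b =>
      ⟨p.1 b + C - (factorW x 0 n).count b, by have := key p b; omega⟩ with hφ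
    have hinj : Function.Injective φ := by
      intro p q hpq
      apply Subtype.ext
      funext b
      have h1 : (φ p b : ℕ) = (φ q b : ℕ) := by rw [hpq]
      simp only [hφ] at h1
      have hp := key p b
      have hq := key q b
      omega
    have hle := Nat.card_le_card_of_injective φ hinj
    have : abComplexity x n = Nat.card S := (Nat.card_coe_set_eq S).symm
    rw [this]
    calc Nat.card S ≤ Nat.card (Fin d → Fin (2 * C + 1)) := hle
      _ = (2 * C + 1) ^ d := by simp
end

section
/- The abelian complexity of the Thue–Morse word equals 2 for all odd n ≥ 1 and equals 3 for all even n ≥ 2. -/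
/-- The Thue–Morse word: `tm n` is the parity of the number of `1`s in the binary
expansion of `n`. -/
def tm : ℕ → Fin 2 :=
  fun n => if ((Nat.digits 2 n).count 1) % 2 = 0 then 0 else 1

namespace TMAux

def L (n : ℕ) : ℕ := (Nat.digits 2 n).count 1

def t (n : ℕ) : ℕ := L n % 2

def S (i n : ℕ) : ℕ := ∑ j ∈ Finset.range n, t (i + j)

lemma L_zero : L 0 = 0 := by simp [L]

lemma L_two_mul (k : ℕ) : L (2 * k) = L k := by
  rcases Nat.eq_zero_or_pos k with h | h
  · simp [h]
  · unfold L
    rw [Nat.digits_def' (by norm_num : (1:ℕ) < 2) (by omega)]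
    have h1 : 2 * k % 2 = 0 := by omega
    have h2 : 2 * k / 2 = k := by omega
    rw [h1, h2, List.count_cons]
    simp

lemma L_two_mul_add_one (k : ℕ) : L (2 * k + 1) = L k + 1 := by
  unfold L
  rw [Nat.digits_def' (by norm_num : (1:ℕ) < 2) (by omega)]
  have h1 : (2 * k + 1) % 2 = 1 := by omega
  have h2 : (2 * k + 1) / 2 = k := by omega
  rw [h1, h2, List.count_cons]
  simp

lemma t_le (n : ℕ) : t n ≤ 1 := by
  show L n % 2 ≤ 1; omega

lemma t_two_mul (k : ℕ) : t (2 * k) = t k := by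
  show L (2 * k) % 2 = L k % 2; rw [L_two_mul]

lemma pair (k : ℕ) : t (2 * k) + t (2 * k + 1) = 1 := by
  show L (2 * k) % 2 + L (2 * k + 1) % 2 = 1
  rw [L_two_mul, L_two_mul_add_one]
  omega

lemma L_pow (N : ℕ) : L (2 ^ N) = 1 := by
  induction N with
  | zero => simp [L]
  | succ N ih => rw [pow_succ, mul_comm, L_two_mul]; exact ih

lemma L_three_pow (N : ℕ) : L (3 * 2 ^ N) = 2 := by
  induction N with
  | zero =>
    show L 3 = 2
    unfold L
    rw [Nat.digits_def' (by norm_num : (1:ℕ) < 2) (by norm_num)]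
    rw [Nat.digits_def' (by norm_num : (1:ℕ) < 2) (by norm_num)]
    simp
  | succ N ih =>
    have : 3 * 2 ^ (N + 1) = 2 * (3 * 2 ^ N) := by ring
    rw [this, L_two_mul]; exact ih

lemma L_pow_add (N : ℕ) : ∀ x, x < 2 ^ N → L (2 ^ N + x) = L x + 1 := by
  induction N with
  | zero =>
    intro x hx
    interval_cases x
    simp [L]
  | succ N ih =>
    intro x hx
    rcases Nat.even_or_odd x with ⟨y, hy⟩ | ⟨y, hy⟩
    · have hy2 : x = 2 * y := by omega
      have hylt : y < 2 ^ N := by rw [pow_succ] at hx; omega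
      have : 2 ^ (N + 1) + x = 2 * (2 ^ N + y) := by rw [hy2]; ring
      rw [this, L_two_mul, ih y hylt, hy2, L_two_mul]
    · have hylt : y < 2 ^ N := by rw [pow_succ] at hx; omega
      have : 2 ^ (N + 1) + x = 2 * (2 ^ N + y) + 1 := by rw [hy]; ring
      rw [this, L_two_mul_add_one, ih y hylt, hy, L_two_mul_add_one]

lemma t_pow (N : ℕ) : t (2 ^ N) = 1 := by
  show L (2 ^ N) % 2 = 1; rw [L_pow]

lemma t_three_pow (N : ℕ) : t (3 * 2 ^ N) = 0 := by
  show L (3 * 2 ^ N) % 2 = 0; rw [L_three_pow]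

lemma tm_eq (n : ℕ) : tm n = if t n = 1 then 1 else 0 := by
  unfold tm t L
  rcases Nat.mod_two_eq_zero_or_one ((Nat.digits 2 n).count 1) with h | h <;> simp [h]

/- Sum lemmas -/

lemma S_zero (i : ℕ) : S i 0 = 0 := by simp [S]

lemma S_succ (i n : ℕ) : S i (n + 1) = S i n + t (i + n) := by
  unfold S; rw [Finset.sum_range_succ]

lemma S_first (i n : ℕ) : S i (n + 1) = t i + S (i + 1) n := by
  unfold S
  rw [Finset.sum_range_succ']
  have h0 : i + 0 = i := rfl
  rw [h0, add_comm]
  congr 1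
  apply Finset.sum_congr rfl
  intro j _
  congr 1
  omega

lemma S_even (a b : ℕ) : S (2 * a) (2 * b) = b := by
  induction b with
  | zero => simp [S]
  | succ b ih =>
    have h : 2 * (b + 1) = 2 * b + 1 + 1 := by ring
    rw [h, S_succ, S_succ, ih]
    have e1 : 2 * a + 2 * b = 2 * (a + b) := by ring
    have e2 : 2 * a + (2 * b + 1) = 2 * (a + b) + 1 := by ring
    rw [e1, e2]
    have := pair (a + b)
    omega

lemma S_odd_even_start (a m : ℕ) : S (2 * a) (2 * m + 1) = m + t (a + m) := by
  rw [S_succ, S_even]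
  have : 2 * a + 2 * m = 2 * (a + m) := by ring
  rw [this, t_two_mul]

lemma S_odd_odd_start (a m : ℕ) : S (2 * a + 1) (2 * m + 1) = t (2 * a + 1) + m := by
  rw [S_first]
  have : 2 * a + 1 + 1 = 2 * (a + 1) := by ring
  rw [this, S_even]

lemma S_even_odd_start (a m : ℕ) (hm : 1 ≤ m) :
    S (2 * a + 1) (2 * m) = (m - 1) + t (2 * a + 1) + t (a + m) := by
  have h : 2 * m = (2 * (m - 1) + 1) + 1 := by omega
  rw [h, S_first]
  have h2 : 2 * a + 1 + 1 = 2 * (a + 1) := by ring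
  rw [h2, S_odd_even_start]
  have h3 : a + 1 + (m - 1) = a + m := by omega
  rw [h3]
  ring

/- Existence lemmas -/

lemma exists_tail_one (m : ℕ) : ∃ a, t (a + m) = 1 := by
  refine ⟨2 ^ m - m, ?_⟩
  have hm : m < 2 ^ m := (Nat.lt_two_pow_self (n := m))
  have : 2 ^ m - m + m = 2 ^ m := by omega
  rw [this, t_pow]

lemma exists_tail_zero (m : ℕ) : ∃ a, t (a + m) = 0 := by
  refine ⟨3 * 2 ^ m - m, ?_⟩
  have hm : m < 2 ^ m := (Nat.lt_two_pow_self (n := m))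
  have : 3 * 2 ^ m - m + m = 3 * 2 ^ m := by omega
  rw [this, t_three_pow]

lemma E1 (m : ℕ) (hm : 1 ≤ m) : ∃ a, t a = 0 ∧ t (a + m) = 1 := by
  set N := m with hN
  have hmN : m ≤ 2 ^ N := le_of_lt ((Nat.lt_two_pow_self (n := m)))
  have hpow : 2 ^ (N + 1) = 2 ^ N + 2 ^ N := by rw [pow_succ]; ring
  have key : L (2 ^ (N + 1) - m) = L (2 ^ N - m) + 1 := by
    have h1 : 2 ^ (N + 1) - m = 2 ^ N + (2 ^ N - m) := by omega
    rw [h1]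
    exact L_pow_add N _ (by omega)
  rcases Nat.mod_two_eq_zero_or_one (L (2 ^ N - m)) with h | h
  · refine ⟨2 ^ N - m, ?_, ?_⟩
    · show L (2 ^ N - m) % 2 = 0; exact h
    · have : 2 ^ N - m + m = 2 ^ N := by omega
      rw [this, t_pow]
  · refine ⟨2 ^ (N + 1) - m, ?_, ?_⟩
    · show L (2 ^ (N + 1) - m) % 2 = 0; rw [key]; omega
    · have : 2 ^ (N + 1) - m + m = 2 ^ (N + 1) := by omega
      rw [this, t_pow]

lemma E2 (m : ℕ) (hm : 1 ≤ m) : ∃ a, t a = 1 ∧ t (a + m) = 0 := by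
  set N := m with hN
  have hmN : m ≤ 2 ^ N := le_of_lt ((Nat.lt_two_pow_self (n := m)))
  have hpow : 2 ^ (N + 1) = 2 ^ N + 2 ^ N := by rw [pow_succ]; ring
  have hpow2 : 2 ^ (N + 2) = 2 ^ (N + 1) + 2 ^ (N + 1) := by rw [pow_succ]; ring
  have key1 : L (3 * 2 ^ N - m) = L (2 ^ N - m) + 1 := by
    have h1 : 3 * 2 ^ N - m = 2 ^ (N + 1) + (2 ^ N - m) := by omega
    rw [h1]
    exact L_pow_add (N + 1) _ (by omega)
  have key2 : L (3 * 2 ^ (N + 1) - m) = L (2 ^ N - m) + 2 := by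
    have h1 : 3 * 2 ^ (N + 1) - m = 2 ^ (N + 2) + (2 ^ (N + 1) - m) := by omega
    rw [h1, L_pow_add (N + 2) _ (by omega)]
    have h2 : 2 ^ (N + 1) - m = 2 ^ N + (2 ^ N - m) := by omega
    rw [h2, L_pow_add N _ (by omega)]
  rcases Nat.mod_two_eq_zero_or_one (L (2 ^ N - m)) with h | h
  · refine ⟨3 * 2 ^ N - m, ?_, ?_⟩
    · show L (3 * 2 ^ N - m) % 2 = 1; rw [key1]; omega
    · have : 3 * 2 ^ N - m + m = 3 * 2 ^ N := by omega
      rw [this, t_three_pow]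
  · refine ⟨3 * 2 ^ (N + 1) - m, ?_, ?_⟩
    · show L (3 * 2 ^ (N + 1) - m) % 2 = 1; rw [key2]; omega
    · have : 3 * 2 ^ (N + 1) - m + m = 3 * 2 ^ (N + 1) := by omega
      rw [this, t_three_pow]

/- The set of one-counts -/

lemma Todd (m : ℕ) : {s | ∃ i, S i (2 * m + 1) = s} = {m, m + 1} := by
  ext s
  simp only [Set.mem_setOf_eq, Set.mem_insert_iff, Set.mem_singleton_iff]
  constructor
  · rintro ⟨i, rfl⟩
    rcases Nat.even_or_odd i with ⟨a, ha⟩ | ⟨a, ha⟩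
    · have : i = 2 * a := by omega
      rw [this, S_odd_even_start]
      have := t_le (a + m); omega
    · rw [ha, S_odd_odd_start]
      have := t_le (2 * a + 1); omega
  · rintro (h | h)
    · obtain ⟨a, ha⟩ := exists_tail_zero m
      exact ⟨2 * a, by rw [S_odd_even_start, ha]; omega⟩
    · obtain ⟨a, ha⟩ := exists_tail_one m
      exact ⟨2 * a, by rw [S_odd_even_start, ha]; omega⟩

lemma Teven (m : ℕ) (hm : 1 ≤ m) :
    {s | ∃ i, S i (2 * m) = s} = {m - 1, m, m + 1} := by
  ext s
  simp only [Set.mem_setOf_eq, Set.mem_insert_iff, Set.mem_singleton_iff]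
  constructor
  · rintro ⟨i, rfl⟩
    rcases Nat.even_or_odd i with ⟨a, ha⟩ | ⟨a, ha⟩
    · have : i = 2 * a := by omega
      rw [this, S_even]; omega
    · rw [ha, S_even_odd_start a m hm]
      have := t_le (2 * a + 1); have := t_le (a + m); omega
  · rintro (h | h | h)
    · obtain ⟨a, ha, ha'⟩ := E2 m hm
      refine ⟨2 * a + 1, ?_⟩
      rw [S_even_odd_start a m hm, ha']
      have hp := pair a
      rw [t_two_mul] at hp
      omega
    · exact ⟨2 * 0, by rw [S_even]; omega⟩
    · obtain ⟨a, ha, ha'⟩ := E1 m hm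
      refine ⟨2 * a + 1, ?_⟩
      rw [S_even_odd_start a m hm, ha']
      have hp := pair a
      rw [t_two_mul] at hp
      omega

/- Counts in factors -/

lemma factor_succ (i n : ℕ) :
    factorW tm i (n + 1) = factorW tm i n ++ [tm (i + n)] := by
  unfold factorW
  rw [List.range_succ]
  simp

lemma count_one (i n : ℕ) : (factorW tm i n).count 1 = S i n := by
  induction n with
  | zero => simp [factorW, S]
  | succ n ih =>
    rw [factor_succ, List.count_append, ih, S_succ]
    congr 1
    rw [tm_eq]
    rcases Nat.mod_two_eq_zero_or_one (L (i + n)) with h | h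
    · have ht : t (i + n) = 0 := h
      rw [ht]; simp
    · have ht : t (i + n) = 1 := h
      rw [ht]; simp

lemma count_sum (i n : ℕ) :
    (factorW tm i n).count 0 + (factorW tm i n).count 1 = n := by
  induction n with
  | zero => simp [factorW]
  | succ n ih =>
    rw [factor_succ, List.count_append, List.count_append]
    rw [tm_eq]
    rcases Nat.mod_two_eq_zero_or_one (L (i + n)) with h | h
    · have ht : t (i + n) = 0 := h
      rw [ht]; simp; omega
    · have ht : t (i + n) = 1 := h
      rw [ht]; simp; omega

lemma S_le (i n : ℕ) : S i n ≤ n := by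
  have h1 := count_sum i n
  have h2 := count_one i n
  omega

lemma count_zero (i n : ℕ) : (factorW tm i n).count 0 = n - S i n := by
  have h1 := count_sum i n
  have h2 := count_one i n
  omega

/- Parikh vector set -/

lemma v_inj (n : ℕ) : Function.Injective (fun s : ℕ => (![n - s, s] : Fin 2 → ℕ)) := by
  intro s s' h
  have := congrFun h 1
  simpa using this

lemma P_eq (n : ℕ) :
    {p : Fin 2 → ℕ | ∃ i, ∀ a, (factorW tm i n).count a = p a}
      = (fun s : ℕ => (![n - s, s] : Fin 2 → ℕ)) '' {s | ∃ i, S i n = s} := by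
  ext p
  simp only [Set.mem_setOf_eq, Set.mem_image]
  constructor
  · rintro ⟨i, h⟩
    refine ⟨S i n, ⟨i, rfl⟩, ?_⟩
    funext a
    fin_cases a
    · show n - S i n = p 0
      rw [← h 0, count_zero]
    · show S i n = p 1
      rw [← h 1, count_one]
  · rintro ⟨s, ⟨i, rfl⟩, rfl⟩
    refine ⟨i, fun a => ?_⟩
    fin_cases a
    · show (factorW tm i n).count 0 = n - S i n
      exact count_zero i n
    · show (factorW tm i n).count 1 = S i n
      exact count_one i n

lemma ab_eq (n : ℕ) : abComplexity tm n = Set.ncard {s | ∃ i, S i n = s} := by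
  unfold abComplexity
  rw [P_eq, Set.ncard_image_of_injective _ (v_inj n)]

end TMAux

/-- The abelian complexity of the Thue–Morse word is `2` for odd lengths and `3` for
even lengths `≥ 2`. -/
theorem stmt3 :
    (∀ n : ℕ, Odd n → abComplexity tm n = 2) ∧
      (∀ n : ℕ, Even n → 2 ≤ n → abComplexity tm n = 3) := by
  constructor
  · intro n hn
    obtain ⟨m, rfl⟩ := hn
    rw [TMAux.ab_eq, TMAux.Todd]
    exact Set.ncard_pair (by omega)
  · intro n hn h2
    obtain ⟨r, rfl⟩ := hn
    have hr : 1 ≤ r := by omega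
    have h : r + r = 2 * r := by ring
    rw [h, TMAux.ab_eq, TMAux.Teven r hr]
    rw [Set.ncard_insert_of_notMem (by intro hmem; simp at hmem; omega) (Set.toFinite _),
        Set.ncard_insert_of_notMem (by intro hmem; simp at hmem) (Set.toFinite _),
        Set.ncard_singleton]
end

section
/- If a word w over a d-letter alphabet has two coprime abelian periods p and q and length |w| ≥ 2pq − 1, then w is a power of a single letter. -/
/-- `parikhLt u v`: the Parikh vector of `u` is componentwise at most that of `v`,
with strictly smaller norm. -/
def parikhLt {α : Type*} [DecidableEq α] (u v : List α) : Prop :=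
  (∀ a, u.count a ≤ v.count a) ∧ u.length < v.length

/-- `w` has abelian period `p` (with some preperiod): `w = u₀ u₁ ⋯ u_{m-1} u_m`, where
the middle blocks `u₁, …, u_{m-1}` all have length `p` and equal Parikh vectors, and
the Parikh vectors of the head `u₀` and of the tail `u_m` are strictly dominated by
that of the middle blocks. -/
def HasAbPeriod {α : Type*} [DecidableEq α] (w : List α) (p : ℕ) : Prop :=
  ∃ (u₀ : List α) (mid : List (List α)) (um : List α),
    w = u₀ ++ mid.flatten ++ um ∧ mid ≠ [] ∧
    (∀ u ∈ mid, u.length = p) ∧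
    (∀ u ∈ mid, ∀ v ∈ mid, abelEq u v) ∧
    (∀ u ∈ mid, parikhLt u₀ u ∧ parikhLt um u)

lemma take_flatten_count {α : Type*} [DecidableEq α] (u₀ : List α) (L : List (List α)) (um : List α)
    (p c : ℕ) (a : α) (hl : ∀ u ∈ L, u.length = p) (hc : ∀ u ∈ L, u.count a = c)
    (i : ℕ) (hi : i ≤ L.length) :
    ((u₀ ++ L.flatten ++ um).take (u₀.length + i * p)).count a = u₀.count a + i * c := by
  have htake : (L.take i).flatten.length = i * p := by
    rw [List.length_flatten]
    have h : (L.take i).map List.length = List.replicate i p := by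
      rw [List.eq_replicate_iff]
      refine ⟨by simp [hi], ?_⟩
      intro b hb
      obtain ⟨u, hu, rfl⟩ := List.mem_map.mp hb
      exact hl u (List.mem_of_mem_take hu)
    rw [h, List.sum_replicate, smul_eq_mul]
  have hcnt : (L.take i).flatten.count a = i * c := by
    rw [List.count_flatten]
    have h : (L.take i).map (List.count a) = List.replicate i c := by
      rw [List.eq_replicate_iff]
      refine ⟨by simp [hi], ?_⟩
      intro b hb
      obtain ⟨u, hu, rfl⟩ := List.mem_map.mp hb
      exact hc u (List.mem_of_mem_take hu)
    rw [h, List.sum_replicate, smul_eq_mul]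
  have hsplit : u₀ ++ L.flatten ++ um
      = (u₀ ++ (L.take i).flatten) ++ ((L.drop i).flatten ++ um) := by
    conv_lhs => rw [← List.take_append_drop i L]
    rw [List.flatten_append]
    simp [List.append_assoc]
  rw [hsplit]
  have hlen : u₀.length + i * p = (u₀ ++ (L.take i).flatten).length := by
    simp [htake]
  rw [hlen, List.take_left, List.count_append, hcnt]

lemma exists_meet (p q s0 t0 : ℕ) (hpq : Nat.Coprime p q) (hs : s0 < p) (ht : t0 < q) :
    ∃ i j, i < q ∧ j < p ∧ s0 + i * p = t0 + j * q := by
  haveI : NeZero q := ⟨by omega⟩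
  set i : ℕ := (((t0 : ZMod q) - (s0 : ZMod q)) * (p : ZMod q)⁻¹).val with hidef
  have hiq : i < q := ZMod.val_lt _
  have hinv : (p : ZMod q) * (p : ZMod q)⁻¹ = 1 := ZMod.coe_mul_inv_eq_one p hpq
  have hcong : ((s0 + i * p : ℕ) : ZMod q) = ((t0 : ℕ) : ZMod q) := by
    push_cast
    rw [hidef, ZMod.natCast_val, ZMod.cast_id]
    calc (s0 : ZMod q) + ((t0 : ZMod q) - s0) * (p : ZMod q)⁻¹ * p
        = (s0 : ZMod q) + ((t0 : ZMod q) - s0) * ((p : ZMod q) * (p : ZMod q)⁻¹) := by ring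
      _ = t0 := by rw [hinv]; ring
  have hmod : s0 + i * p ≡ t0 [MOD q] := (ZMod.natCast_eq_natCast_iff _ _ _).mp hcong
  have hle : t0 ≤ s0 + i * p := by
    by_contra h
    push_neg at h
    have h1 : (s0 + i * p) % q = s0 + i * p := Nat.mod_eq_of_lt (by omega)
    have h2 : t0 % q = t0 := Nat.mod_eq_of_lt ht
    unfold Nat.ModEq at hmod
    omega
  obtain ⟨j, hj⟩ := (Nat.modEq_iff_dvd' hle).mp hmod.symm
  have heq : s0 + i * p = t0 + q * j := by rw [← hj, Nat.add_sub_cancel' hle]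
  have h1 : (i + 1) * p ≤ q * p := Nat.mul_le_mul_right p (by omega)
  have h2 : q * j < q * p := by
    calc q * j ≤ t0 + q * j := Nat.le_add_left _ _
      _ = s0 + i * p := heq.symm
      _ < (i + 1) * p := by rw [add_mul, one_mul]; linarith
      _ ≤ q * p := h1
  exact ⟨i, j, hiq, Nat.lt_of_mul_lt_mul_left h2, by rw [heq, mul_comm]⟩

/-- If a word has two coprime abelian periods `p` and `q` and length at least
`2pq - 1`, then it is a power of a single letter. -/
theorem stmt9 {d : ℕ} (w : List (Fin d)) (p q : ℕ) (hpq : Nat.Coprime p q)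
    (hp : HasAbPeriod w p) (hq : HasAbPeriod w q) (hlen : 2 * p * q - 1 ≤ w.length) :
    ∃ a : Fin d, ∀ b ∈ w, b = a := by
  obtain ⟨u₀, mid, um, hw, hne, hlenp, habp, hdomp⟩ := hp
  obtain ⟨v₀, mid', vm, hw', hne', hlenq, habq, hdomq⟩ := hq
  obtain ⟨u₁, hu₁⟩ := List.exists_mem_of_ne_nil mid hne
  obtain ⟨v₁, hv₁⟩ := List.exists_mem_of_ne_nil mid' hne'
  have hs : u₀.length < p := by
    have := (hdomp u₁ hu₁).1.2; rwa [hlenp u₁ hu₁] at this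
  have hsm : um.length < p := by
    have := (hdomp u₁ hu₁).2.2; rwa [hlenp u₁ hu₁] at this
  have ht : v₀.length < q := by
    have := (hdomq v₁ hv₁).1.2; rwa [hlenq v₁ hv₁] at this
  have htm : vm.length < q := by
    have := (hdomq v₁ hv₁).2.2; rwa [hlenq v₁ hv₁] at this
  have hppos : 0 < p := by omega
  have hqpos : 0 < q := by omega
  have hu₁ne : u₁ ≠ [] := by
    intro h; rw [h] at hu₁; have := hlenp [] hu₁; simp at this; omega
  set a := u₁.head hu₁ne with hadef
  have ha : a ∈ u₁ := List.head_mem hu₁ne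
  set c := u₁.count a with hcdef
  set e := v₁.count a with hedef
  have hcall : ∀ u ∈ mid, u.count a = c := fun u hu => habp u hu u₁ hu₁ a
  have heall : ∀ u ∈ mid', u.count a = e := fun u hu => habq u hu v₁ hv₁ a
  set m := mid.length with hmdef
  set m' := mid'.length with hm'def
  -- length computations
  have hflatlen : mid.flatten.length = m * p := by
    rw [List.length_flatten]
    have h : mid.map List.length = List.replicate m p := by
      rw [List.eq_replicate_iff]
      refine ⟨by simp [hmdef], ?_⟩
      intro b hb
      obtain ⟨u, hu, rfl⟩ := List.mem_map.mp hb
      exact hlenp u hu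
    rw [h, List.sum_replicate, smul_eq_mul]
  have hflatlen' : mid'.flatten.length = m' * q := by
    rw [List.length_flatten]
    have h : mid'.map List.length = List.replicate m' q := by
      rw [List.eq_replicate_iff]
      refine ⟨by simp [hm'def], ?_⟩
      intro b hb
      obtain ⟨u, hu, rfl⟩ := List.mem_map.mp hb
      exact hlenq u hu
    rw [h, List.sum_replicate, smul_eq_mul]
  have hwlen : w.length = u₀.length + m * p + um.length := by
    rw [hw]; simp [hflatlen]; ring
  have hwlen' : w.length = v₀.length + m' * q + vm.length := by
    rw [hw']; simp [hflatlen']; ring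
  have hlen' : 2 * p * q ≤ w.length + 1 := Nat.sub_le_iff_le_add.mp hlen
  have hm : 2 * q - 1 ≤ m := by
    by_contra h
    push_neg at h
    have h1 : m * p ≤ (2 * q - 2) * p := Nat.mul_le_mul_right p (by omega)
    have h2 : (2 * q - 2) * p + p + p = 2 * p * q := by
      have hq2 : (2 * q - 2) + 1 + 1 = 2 * q := by omega
      calc (2 * q - 2) * p + p + p = ((2 * q - 2) + 1 + 1) * p := by ring
        _ = (2 * q) * p := by rw [hq2]
        _ = 2 * p * q := by ring
    linarith
  have hm' : 2 * p - 1 ≤ m' := by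
    by_contra h
    push_neg at h
    have h1 : m' * q ≤ (2 * p - 2) * q := Nat.mul_le_mul_right q (by omega)
    have h2 : (2 * p - 2) * q + q + q = 2 * p * q := by
      have hp2 : (2 * p - 2) + 1 + 1 = 2 * p := by omega
      calc (2 * p - 2) * q + q + q = ((2 * p - 2) + 1 + 1) * q := by ring
        _ = (2 * p) * q := by rw [hp2]
        _ = 2 * p * q := by ring
    linarith
  -- the two grids meet
  obtain ⟨i, j, hiq, hjp, hmeet⟩ := exists_meet p q u₀.length v₀.length hpq hs ht
  have hmeet2 : u₀.length + (i + q) * p = v₀.length + (j + p) * q := by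
    have e1 : u₀.length + (i + q) * p = (u₀.length + i * p) + q * p := by ring
    rw [e1, hmeet]; ring
  have E1 := take_flatten_count u₀ mid um p c a hlenp hcall i (by omega)
  have E2 := take_flatten_count u₀ mid um p c a hlenp hcall (i + q) (by omega)
  have E3 := take_flatten_count v₀ mid' vm q e a hlenq heall j (by omega)
  have E4 := take_flatten_count v₀ mid' vm q e a hlenq heall (j + p) (by omega)
  rw [← hw] at E1 E2
  rw [← hw'] at E3 E4
  have h13 : u₀.count a + i * c = v₀.count a + j * e := by
    rw [← E1, ← E3, hmeet]
  have h24 : u₀.count a + (i + q) * c = v₀.count a + (j + p) * e := by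
    rw [← E2, ← E4, hmeet2]
  rw [add_mul, add_mul] at h24
  have hkey : q * c = p * e := by linarith
  have hdvd : p ∣ c := hpq.dvd_of_dvd_mul_left ⟨e, hkey⟩
  have hclep : c ≤ p := by
    rw [hcdef, ← hlenp u₁ hu₁]; exact List.count_le_length
  have hcpos : 0 < c := List.count_pos_iff.mpr ha
  have hcp : c = p := Nat.le_antisymm hclep (Nat.le_of_dvd hcpos hdvd)
  have hall : ∀ b ∈ u₁, a = b := by
    apply List.count_eq_length.mp
    rw [← hcdef, hcp, hlenp u₁ hu₁]
  have hcount0 : ∀ b : Fin d, b ≠ a → u₁.count b = 0 := fun b hb =>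
    List.count_eq_zero.mpr (fun hmem => hb (hall b hmem).symm)
  refine ⟨a, ?_⟩
  intro b hb
  by_contra hba
  have hbpos0 := hcount0 b hba
  rw [hw] at hb
  simp only [List.mem_append] at hb
  rcases hb with (hb | hb) | hb
  · have h1 : 0 < u₀.count b := List.count_pos_iff.mpr hb
    have h2 := (hdomp u₁ hu₁).1.1 b
    omega
  · obtain ⟨l, hl, hbl⟩ := List.mem_flatten.mp hb
    have h1 : 0 < l.count b := List.count_pos_iff.mpr hbl
    have h2 := habp l hl u₁ hu₁ b
    omega
  · have h1 : 0 < um.count b := List.count_pos_iff.mpr hb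
    have h2 := (hdomp u₁ hu₁).2.1 b
    omega
end

section
/- Let u and v be distinct abelian primitive roots of the same word w. Then gcd(|u|, |v|) ≥ 2. -/
/-- `w` is an abelian `k`-power: `w` is the concatenation of `k` blocks that are
pairwise abelian equivalent. -/
def IsAbPower {α : Type*} [DecidableEq α] (k : ℕ) (w : List α) : Prop :=
  ∃ l : List (List α), l.length = k ∧ w = l.flatten ∧ ∀ u ∈ l, ∀ v ∈ l, abelEq u v

/-- `w` is abelian primitive: it is not an abelian `k`-power for any `k ≥ 2`. -/
def AbPrimitive {α : Type*} [DecidableEq α] (w : List α) : Prop :=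
  ∀ k : ℕ, 2 ≤ k → ¬ IsAbPower k w

/-- `u` is an abelian root of `w`: `w` decomposes into blocks, the first of which is
`u`, all abelian equivalent to `u`. -/
def IsAbRoot {α : Type*} [DecidableEq α] (u w : List α) : Prop :=
  ∃ l : List (List α), l ≠ [] ∧ w = l.flatten ∧ l.head? = some u ∧ ∀ v ∈ l, abelEq v u

lemma flatten_count {α : Type*} [DecidableEq α] (u : List α) :
    ∀ (l : List (List α)), (∀ v ∈ l, abelEq v u) →
      ∀ a, l.flatten.count a = l.length * u.count a := by
  intro l
  induction l with
  | nil => simp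
  | cons x t ih =>
      intro h a
      simp only [List.flatten_cons, List.count_append, List.length_cons]
      rw [h x (by simp) a, ih (fun v hv => h v (by simp [hv])) a]
      ring

lemma flatten_len {α : Type*} [DecidableEq α] (u : List α) :
    ∀ (l : List (List α)), (∀ v ∈ l, abelEq v u) →
      l.flatten.length = l.length * u.length := by
  intro l
  induction l with
  | nil => simp
  | cons x t ih =>
      intro h
      simp only [List.flatten_cons, List.length_append, List.length_cons]
      have hx : x.length = u.length :=
        (List.perm_iff_count.mpr (h x (by simp))).length_eq
      rw [hx, ih (fun v hv => h v (by simp [hv]))]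
      ring

lemma root_spec {α : Type*} [DecidableEq α] {u w : List α} (h : IsAbRoot u w) :
    u <+: w ∧ ∃ m, 1 ≤ m ∧ w.length = m * u.length ∧
      ∀ a, w.count a = m * u.count a := by
  obtain ⟨l, hne, hw, hhead, hall⟩ := h
  cases l with
  | nil => exact absurd rfl hne
  | cons x t =>
      have hx : x = u := by simpa using hhead
      subst hx
      refine ⟨⟨t.flatten, by simp [hw]⟩, (x :: t).length, by simp, ?_, ?_⟩
      · rw [hw]; exact flatten_len x _ hall
      · intro a; rw [hw]; exact flatten_count x _ hall a

lemma flatten_replicate_singleton {α : Type*} (n : ℕ) (b : α) :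
    (List.replicate n [b]).flatten = List.replicate n b := by
  induction n with
  | zero => simp
  | succ n ih => simp [List.replicate_succ, ih]

lemma prim_not_replicate {α : Type*} [DecidableEq α] {u : List α}
    (hu' : AbPrimitive u) (b : α) (hn : 2 ≤ u.length) :
    u ≠ List.replicate u.length b := by
  intro h
  refine hu' u.length hn ⟨List.replicate u.length [b], by simp, ?_, ?_⟩
  · rw [flatten_replicate_singleton]; exact h
  · intro x hx y hy
    rw [List.eq_of_mem_replicate hx, List.eq_of_mem_replicate hy]
    intro a; rfl

lemma prim_ne_nil {α : Type*} [DecidableEq α] {u : List α}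
    (hu' : AbPrimitive u) : u ≠ [] := by
  intro h
  exact hu' 2 le_rfl ⟨[[], []], by simp, by simp [h], by intro x hx y hy; simp at hx hy; subst hx; subst hy; intro a; rfl⟩

/-- If a root is abelian primitive, its length is 1 or it is not a replicate;
key step: if gcd is 1 then the root is a replicate, hence length 1. -/
lemma root_len_one {α : Type*} [DecidableEq α] {u : List α}
    (hu' : AbPrimitive u) (hd : ∀ a, u.length ∣ u.count a) : u.length = 1 := by
  have hne := prim_ne_nil hu'
  have hpos : 1 ≤ u.length := List.length_pos_iff.mpr hne
  by_contra h
  have h2 : 2 ≤ u.length := by omega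
  obtain ⟨b, hb⟩ := List.exists_mem_of_ne_nil u hne
  have hcb : u.length ≤ u.count b := by
    have h1 : u.count b ≠ 0 := fun h0 => (List.count_eq_zero.mp h0) hb
    exact Nat.le_of_dvd (by omega) (hd b)
  have hle : u.count b ≤ u.length := List.count_le_length
  have heq : u.count b = u.length := le_antisymm hle hcb
  have : u = List.replicate u.length b := by
    apply List.eq_replicate_of_mem
    intro c hc
    by_contra hcb'
    have := List.count_eq_length.mp heq c hc
    exact hcb' this.symm
  exact prim_not_replicate hu' b h2 this

/-- If `u` and `v` are distinct abelian primitive roots of the same word `w`, then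
`gcd(|u|, |v|) ≥ 2`. -/
theorem stmt11 {α : Type*} [DecidableEq α] (u v w : List α)
    (hu : IsAbRoot u w) (hu' : AbPrimitive u)
    (hv : IsAbRoot v w) (hv' : AbPrimitive v)
    (huv : u ≠ v) :
    2 ≤ Nat.gcd u.length v.length := by
  obtain ⟨hupre, m, hm1, hmlen, hmcnt⟩ := root_spec hu
  obtain ⟨hvpre, m', hm'1, hm'len, hm'cnt⟩ := root_spec hv
  have hune := prim_ne_nil hu'
  have hvne := prim_ne_nil hv'
  have hup : 1 ≤ u.length := List.length_pos_iff.mpr hune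
  have hvp : 1 ≤ v.length := List.length_pos_iff.mpr hvne
  set p := u.length with hp
  set q := v.length with hq
  by_contra hcon
  have hd1 : Nat.gcd p q = 1 := by
    have := Nat.gcd_pos_of_pos_left q hup
    omega
  -- key count relation: q * count u a = p * count v a
  have key : ∀ a, q * u.count a = p * v.count a := by
    intro a
    have hn : m * p = m' * q := by rw [← hmlen, ← hm'len]
    have h1 : m * u.count a = m' * v.count a := by
      rw [← hmcnt a, ← hm'cnt a]
    have h2 : q * u.count a * (m * p) = p * v.count a * (m * p) := by
      calc q * u.count a * (m * p) = (m * u.count a) * (q * p) := by ring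
        _ = (m' * v.count a) * (q * p) := by rw [h1]
        _ = (m' * q) * (v.count a * p) := by ring
        _ = (m * p) * (v.count a * p) := by rw [← hn]
        _ = p * v.count a * (m * p) := by ring
    have hmp : 0 < m * p := by positivity
    exact Nat.eq_of_mul_eq_mul_right hmp h2
  have hdu : ∀ a, p ∣ u.count a := by
    intro a
    have : p ∣ q * u.count a := ⟨v.count a, key a⟩
    exact (Nat.Coprime.dvd_of_dvd_mul_left hd1 this)
  have hdv : ∀ a, q ∣ v.count a := by
    intro a
    have : q ∣ p * v.count a := ⟨u.count a, (key a).symm⟩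
    exact (Nat.Coprime.dvd_of_dvd_mul_left (Nat.coprime_comm.mp hd1) this)
  have hpu := root_len_one hu' hdu
  have hqv := root_len_one hv' hdv
  apply huv
  have hlen : u.length = v.length := hpu.trans hqv.symm
  have : u <+: v := List.prefix_of_prefix_length_le hupre hvpre (le_of_eq hlen)
  exact this.eq_of_length hlen
end

section
/- If an infinite word x contains only finitely many abelian unbordered factors, then x has bounded abelian complexity, i.e., there exists a constant N such that for every n ≥ 1 the factors of x of length n fall into at most N abelian equivalence classes. -/
/-- `v` is a (finite) factor of the infinite word `x`. -/
def isFactorOf {d : ℕ} (v : List (Fin d)) (x : ℕ → Fin d) : Prop :=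
  ∃ i, v = factorW x i v.length

/-- `w` has an abelian border: a nonempty proper prefix abelian equivalent to the
suffix of the same length. -/
def AbBordered {d : ℕ} (w : List (Fin d)) : Prop :=
  ∃ ℓ, 0 < ℓ ∧ ℓ < w.length ∧
    ∀ a, (w.take ℓ).count a = (w.drop (w.length - ℓ)).count a

namespace Stmt12Aux

variable {d : ℕ} (x : ℕ → Fin d)

def psi (a : Fin d) (i n : ℕ) : ℕ := (factorW x i n).count a

lemma factorW_length (i n : ℕ) : (factorW x i n).length = n := by
  simp [factorW]

lemma factorW_add (i m n : ℕ) :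
    factorW x i (m + n) = factorW x i m ++ factorW x (i + m) n := by
  unfold factorW
  rw [List.range_add, List.map_append, List.map_map]
  congr 1
  ext j
  simp [add_assoc]

lemma psi_add (a : Fin d) (i m n : ℕ) :
    psi x a i (m + n) = psi x a i m + psi x a (i + m) n := by
  unfold psi
  rw [factorW_add, List.count_append]

lemma psi_le (a : Fin d) (i n : ℕ) : psi x a i n ≤ n := by
  have : List.count a (factorW x i n) ≤ (factorW x i n).length := List.count_le_length
  rwa [factorW_length] at this

lemma factorW_take {k n : ℕ} (i : ℕ) (h : k ≤ n) :
    (factorW x i n).take k = factorW x i k := by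
  conv_lhs => rw [show n = k + (n - k) from by omega, factorW_add]
  exact List.take_left' (factorW_length x i k)

lemma factorW_drop {k n : ℕ} (i : ℕ) (h : k ≤ n) :
    (factorW x i n).drop k = factorW x (i + k) (n - k) := by
  conv_lhs => rw [show n = k + (n - k) from by omega, factorW_add]
  exact List.drop_left' (factorW_length x i k)

lemma main (K : ℕ) (hK1 : 1 ≤ K)
    (hK : ∀ v : List (Fin d), isFactorOf v x → K ≤ v.length → AbBordered v) :
    ∀ s u v n (a : Fin d), (u - v) + (v - u) + n ≤ s →
      psi x a u n ≤ psi x a v n + (K - 1) := by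
  intro s
  induction s using Nat.strong_induction_on with
  | _ s IH =>
  intro u v n a hs
  by_contra hcon
  push_neg at hcon
  have hpl := psi_le x a u n
  have hKn : K ≤ n := by omega
  set p := min u v with hp
  set s₀ := (u - v) + (v - u) + n with hs₀
  have hw : AbBordered (factorW x p s₀) := by
    apply hK
    · exact ⟨p, by rw [factorW_length]⟩
    · rw [factorW_length]; omega
  obtain ⟨ℓ, hl0, hls, hb⟩ := hw
  rw [factorW_length] at hls
  have hb' : ∀ a' : Fin d, psi x a' p ℓ = psi x a' (p + (s₀ - ℓ)) ℓ := by
    intro a'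
    have hb2 := hb a'
    rw [factorW_length, factorW_take x p (le_of_lt hls),
        factorW_drop x p (Nat.sub_le s₀ ℓ),
        show s₀ - (s₀ - ℓ) = ℓ from by omega] at hb2
    exact hb2
  have hne : u ≠ v := by
    intro hEq
    rw [hEq] at hcon
    omega
  rcases Nat.lt_or_ge u v with huv' | huv'
  · -- u < v, heavy window first; p = u, s₀ = (v-u)+n
    have hpu : p = u := by omega
    rcases le_or_gt ℓ n with hln | hln
    · have e1 : psi x a u n = psi x a u ℓ + psi x a (u + ℓ) (n - ℓ) := by
        conv_lhs => rw [show n = ℓ + (n - ℓ) from by omega]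
        exact psi_add x a u ℓ (n - ℓ)
      have e2 : psi x a v n = psi x a v (n - ℓ) + psi x a (v + (n - ℓ)) ℓ := by
        conv_lhs => rw [show n = (n - ℓ) + ℓ from by omega]
        exact psi_add x a v (n - ℓ) ℓ
      have e3 := hb' a
      rw [hpu, show u + (s₀ - ℓ) = v + (n - ℓ) from by omega] at e3
      have hIH := IH (((u + ℓ) - v) + (v - (u + ℓ)) + (n - ℓ)) (by omega)
        (u + ℓ) v (n - ℓ) a le_rfl
      omega
    · have e1 : psi x a u ℓ = psi x a u n + psi x a (u + n) (ℓ - n) := by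
        conv_lhs => rw [show ℓ = n + (ℓ - n) from by omega]
        exact psi_add x a u n (ℓ - n)
      have e2 := psi_add x a (v - (ℓ - n)) (ℓ - n) n
      rw [show (ℓ - n) + n = ℓ from by omega,
          show (v - (ℓ - n)) + (ℓ - n) = v from by omega] at e2
      have e3 := hb' a
      rw [hpu, show u + (s₀ - ℓ) = v - (ℓ - n) from by omega] at e3
      have hIH := IH (((v - (ℓ - n)) - (u + n)) + ((u + n) - (v - (ℓ - n))) + (ℓ - n))
        (by omega) (v - (ℓ - n)) (u + n) (ℓ - n) a le_rfl
      omega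
  · -- v ≤ u; since equality contradicts hcon, v < u; p = v, s₀ = (u-v)+n
    have huv'' : v < u := Nat.lt_of_le_of_ne huv' (fun hEq => hne hEq.symm)
    have hpv : p = v := by omega
    rcases le_or_gt ℓ n with hln | hln
    · have e1 : psi x a v n = psi x a v ℓ + psi x a (v + ℓ) (n - ℓ) := by
        conv_lhs => rw [show n = ℓ + (n - ℓ) from by omega]
        exact psi_add x a v ℓ (n - ℓ)
      have e2 : psi x a u n = psi x a u (n - ℓ) + psi x a (u + (n - ℓ)) ℓ := by
        conv_lhs => rw [show n = (n - ℓ) + ℓ from by omega]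
        exact psi_add x a u (n - ℓ) ℓ
      have e3 := hb' a
      rw [hpv, show v + (s₀ - ℓ) = u + (n - ℓ) from by omega] at e3
      have hIH := IH ((u - (v + ℓ)) + ((v + ℓ) - u) + (n - ℓ)) (by omega)
        u (v + ℓ) (n - ℓ) a le_rfl
      omega
    · have e1 : psi x a v ℓ = psi x a v n + psi x a (v + n) (ℓ - n) := by
        conv_lhs => rw [show ℓ = n + (ℓ - n) from by omega]
        exact psi_add x a v n (ℓ - n)
      have e2 := psi_add x a (u - (ℓ - n)) (ℓ - n) n
      rw [show (ℓ - n) + n = ℓ from by omega,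
          show (u - (ℓ - n)) + (ℓ - n) = u from by omega] at e2
      have e3 := hb' a
      rw [hpv, show v + (s₀ - ℓ) = u - (ℓ - n) from by omega] at e3
      have hIH := IH (((v + n) - (u - (ℓ - n))) + ((u - (ℓ - n)) - (v + n)) + (ℓ - n))
        (by omega) (v + n) (u - (ℓ - n)) (ℓ - n) a le_rfl
      omega

end Stmt12Aux

/-- If an infinite word has only finitely many abelian unbordered factors, then it
has bounded abelian complexity. -/
theorem stmt12 {d : ℕ} (x : ℕ → Fin d)
    (h : {v : List (Fin d) | isFactorOf v x ∧ ¬ AbBordered v}.Finite) :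
    ∃ N : ℕ, ∀ n : ℕ, 1 ≤ n → abComplexity x n ≤ N := by
  classical
  set K := h.toFinset.sup (fun v => v.length) + 1 with hKdef
  have hK1 : 1 ≤ K := by omega
  have hK : ∀ v : List (Fin d), isFactorOf v x → K ≤ v.length → AbBordered v := by
    intro v hf hlen
    by_contra hnb
    have hv : v ∈ h.toFinset := h.mem_toFinset.2 ⟨hf, hnb⟩
    have h3 : v.length ≤ h.toFinset.sup (fun v => v.length) :=
      Finset.le_sup (f := fun v : List (Fin d) => v.length) hv
    omega
  have hmain : ∀ u v n (a : Fin d),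
      Stmt12Aux.psi x a u n ≤ Stmt12Aux.psi x a v n + (K - 1) :=
    fun u v n a => Stmt12Aux.main x K hK1 hK ((u - v) + (v - u) + n) u v n a le_rfl
  refine ⟨(2 * K) ^ d, fun n hn => ?_⟩
  set lo : Fin d → ℕ := fun a => Stmt12Aux.psi x a 0 n - (K - 1) with hlo
  set hi : Fin d → ℕ := fun a => Stmt12Aux.psi x a 0 n + (K - 1) with hhi
  have hsub : {p : Fin d → ℕ | ∃ i, ∀ a, (factorW x i n).count a = p a}
      ⊆ ↑(Finset.Icc lo hi) := by
    rintro p ⟨i, hi'⟩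
    simp only [Finset.coe_Icc, Set.mem_Icc]
    constructor
    · intro a
      have h1 := hmain 0 i n a
      have h2 := hi' a
      simp only [hlo, Stmt12Aux.psi] at *
      omega
    · intro a
      have h1 := hmain i 0 n a
      have h2 := hi' a
      simp only [hhi, Stmt12Aux.psi] at *
      omega
  calc abComplexity x n
      ≤ (Finset.Icc lo hi).card := by
        rw [abComplexity, ← Set.ncard_coe_finset]
        exact Set.ncard_le_ncard hsub (Finset.finite_toSet _)
    _ = ∏ a : Fin d, (Finset.Icc (lo a) (hi a)).card := Pi.card_Icc lo hi
    _ ≤ (2 * K) ^ d := by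
        have := Finset.prod_le_pow_card Finset.univ
          (fun a : Fin d => (Finset.Icc (lo a) (hi a)).card) (2 * K) ?_
        · simpa using this
        · intro a _
          show (Finset.Icc (lo a) (hi a)).card ≤ 2 * K
          simp only [hlo, hhi, Nat.card_Icc]
          omega
end

section
/- Let s_α be a Sturmian word of irrational slope α, and let m, k be positive integers with k ≥ 2. Then s_α contains an abelian power of period m and exponent k if and only if ‖mα‖ < 1/k, where ‖θ‖ denotes the distance from θ to the nearest integer. -/
/-- The Sturmian word of slope `α` and intercept `ρ`:
`s(n) = ⌊α(n+1)+ρ⌋ − ⌊αn+ρ⌋`. -/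
noncomputable def sturmian (α ρ : ℝ) (n : ℕ) : ℤ :=
  ⌊α * (n + 1) + ρ⌋ - ⌊α * n + ρ⌋

/-- `s` contains an abelian power of period `m` and exponent `k`: for some position
`i`, the `k` consecutive blocks of length `m` starting at `i` all have the same sum
(equivalently, for a binary word, the same number of occurrences of `1`). -/
def HasAbPow (s : ℕ → ℤ) (m k : ℕ) : Prop :=
  ∃ i : ℕ, ∀ j < k,
    (∑ t ∈ Finset.range m, s (i + j * m + t)) = ∑ t ∈ Finset.range m, s (i + t)

/-- The distance from a real number to the nearest integer. -/
noncomputable def nearestDist (θ : ℝ) : ℝ :=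
  min (Int.fract θ) (1 - Int.fract θ)

lemma floor_split (x y : ℝ) : ⌊x + y⌋ = ⌊x⌋ + ⌊y⌋ + ⌊Int.fract x + Int.fract y⌋ := by
  conv_lhs => rw [show x + y = (Int.fract x + Int.fract y) + ((⌊x⌋ + ⌊y⌋ : ℤ) : ℝ) by
    unfold Int.fract; push_cast; ring]
  rw [Int.floor_add_intCast]; ring

lemma fract_shift (x θ : ℝ) : Int.fract (x + θ) = Int.fract (Int.fract x + θ) := by
  rw [show Int.fract x + θ = (x + θ) + ((-⌊x⌋ : ℤ) : ℝ) by unfold Int.fract; push_cast; ring,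
    Int.fract_add_intCast]

lemma sturmian_block_sum (α ρ : ℝ) (p m : ℕ) :
    (∑ t ∈ Finset.range m, sturmian α ρ (p + t)) = ⌊α * (p + m) + ρ⌋ - ⌊α * p + ρ⌋ := by
  induction m with
  | zero => simp
  | succ n ih =>
      rw [Finset.sum_range_succ, ih, sturmian]
      push_cast
      ring_nf

lemma hits (y δ u v : ℝ) (hu : 0 ≤ u) (hv : v ≤ 1) (hδ0 : 0 < δ) (hδ : δ < v - u) :
    ∃ j : ℕ, Int.fract (y + j * δ) ∈ Set.Ioo u v := by
  classical
  set N : ℤ := ⌊y - u⌋ + 1 with hN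
  set M : ℝ := (N : ℝ) + u with hM
  have hyM : y < M := by
    have := Int.lt_floor_add_one (y - u)
    rw [hM, hN]; push_cast; linarith
  have hex : ∃ j : ℕ, M < y + j * δ := by
    obtain ⟨j, hj⟩ := exists_nat_gt ((M - y) / δ)
    refine ⟨j, ?_⟩
    rw [div_lt_iff₀ hδ0] at hj; linarith
  let j := Nat.find hex
  have hj : M < y + j * δ := Nat.find_spec hex
  have hj1 : j ≠ 0 := by
    intro h
    have h2 := hj
    rw [h] at h2; push_cast at h2; linarith
  have hprev : ¬ M < y + ((j - 1 : ℕ) : ℝ) * δ :=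
    Nat.find_min hex (Nat.sub_lt (Nat.pos_of_ne_zero hj1) one_pos)
  push_neg at hprev
  have hcast : ((j - 1 : ℕ) : ℝ) = (j : ℝ) - 1 := by
    have h1 : 1 ≤ j := Nat.one_le_iff_ne_zero.2 hj1
    push_cast [Nat.cast_sub h1]
    ring
  have hub : y + j * δ < M + (v - u) := by
    have he : y + (j : ℝ) * δ = (y + ((j - 1 : ℕ) : ℝ) * δ) + δ := by rw [hcast]; ring
    rw [he]; linarith
  refine ⟨j, ?_⟩
  have h1 : u < y + j * δ - N := by rw [hM] at hj; linarith
  have h2 : y + j * δ - N < v := by rw [hM] at hub; linarith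
  have hfr : Int.fract (y + j * δ) = y + j * δ - N := by
    conv_lhs => rw [show y + (j : ℝ) * δ = (y + j * δ - N) + (N : ℝ) by ring, Int.fract_add_intCast]
    exact Int.fract_eq_self.mpr ⟨by linarith, by linarith⟩
  rw [hfr]; exact ⟨h1, h2⟩

lemma small_step (α : ℝ) (hirr : Irrational α) (ε : ℝ) (hε : 0 < ε) :
    ∃ N : ℕ, Int.fract (α * N) ∈ Set.Ioo 0 ε := by
  set S := AddSubgroup.closure ({1, α} : Set ℝ) with hS
  have hdense : Dense (S : Set ℝ) := by
    rcases S.dense_or_cyclic with h | ⟨a, ha⟩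
    · exact h
    · exfalso
      have h1 : (1 : ℝ) ∈ S := AddSubgroup.subset_closure (by simp)
      have hα : α ∈ S := AddSubgroup.subset_closure (by simp)
      rw [ha, AddSubgroup.mem_closure_singleton] at h1 hα
      obtain ⟨z1, hz1⟩ := h1
      obtain ⟨z2, hz2⟩ := hα
      rw [zsmul_eq_mul] at hz1 hz2
      have hz1ne : (z1 : ℝ) ≠ 0 := by
        intro h; rw [h, zero_mul] at hz1; norm_num at hz1
      have : α = (z2 : ℝ) / (z1 : ℝ) := by
        rw [eq_div_iff hz1ne, ← hz2]
        linear_combination (z2 : ℝ) * hz1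
      exact hirr ⟨(z2 : ℚ) / (z1 : ℚ), by push_cast; rw [this]⟩
  have hmin : (0 : ℝ) < min ε 1 := lt_min hε one_pos
  obtain ⟨g, hgS, hg⟩ := hdense.exists_between hmin
  rw [SetLike.mem_coe, hS, AddSubgroup.mem_closure_pair] at hgS
  obtain ⟨p, q, hpq⟩ := hgS
  rw [zsmul_eq_mul, zsmul_eq_mul, mul_one] at hpq
  have hg0 : 0 < g := hg.1
  have hg1 : g < 1 := lt_of_lt_of_le hg.2 (min_le_right _ _)
  have hgε : g < ε := lt_of_lt_of_le hg.2 (min_le_left _ _)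
  by_cases hq : q = 0
  · exfalso
    rw [hq] at hpq; push_cast at hpq
    have h1 : (0 : ℝ) < (p : ℝ) := by linarith
    have h2 : (p : ℝ) < 1 := by linarith
    have h1' : 0 < p := by exact_mod_cast h1
    have h2' : p < 1 := by exact_mod_cast h2
    omega
  rcases lt_or_gt_of_ne hq with hqneg | hqpos
  · -- q < 0 : use N = n * (-q) with n = ⌈1/g⌉ - 1
    set n : ℕ := (⌈1 / g⌉ - 1).toNat with hn
    have hceil2 : 2 ≤ ⌈1 / g⌉ := by
      have : (1 : ℝ) < 1 / g := by rw [lt_div_iff₀ hg0]; linarith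
      have := Int.lt_ceil.mpr (by exact_mod_cast this : ((1 : ℤ) : ℝ) < 1 / g)
      omega
    have hncast : (n : ℝ) = (⌈1 / g⌉ : ℝ) - 1 := by
      have h : (((⌈1 / g⌉ - 1).toNat : ℤ)) = ⌈1 / g⌉ - 1 :=
        Int.toNat_of_nonneg (by omega)
      rw [hn]
      exact_mod_cast congrArg (fun x : ℤ => (x : ℝ)) h
    have hnlt : (n : ℝ) < 1 / g := by
      rw [hncast]; linarith [Int.ceil_lt_add_one (1 / g)]
    have hnge : 1 ≤ (n : ℝ) + 1 → True := fun _ => trivial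
    have hng1 : (n : ℝ) * g < 1 := by
      have := (lt_div_iff₀ hg0).mp hnlt
      linarith
    have hng2 : 1 ≤ ((n : ℝ) + 1) * g := by
      have : (1 / g : ℝ) ≤ ⌈1 / g⌉ := Int.le_ceil _
      rw [hncast]
      have := (div_le_iff₀ hg0).mp this
      linarith
    have hn1 : 1 ≤ n := by
      have : (1 : ℤ) ≤ ⌈1 / g⌉ - 1 := by omega
      rw [hn]; omega
    refine ⟨n * (-q).toNat, ?_⟩
    have hqcast : (((-q).toNat : ℝ)) = -(q : ℝ) := by
      have h : (((-q).toNat : ℤ)) = -q := Int.toNat_of_nonneg (by omega)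
      exact_mod_cast congrArg (fun x : ℤ => (x : ℝ)) h
    have harg : α * (↑(n * (-q).toNat)) = -(n : ℝ) * g + ((n : ℤ) * p : ℤ) := by
      push_cast [hqcast]
      have hqα : (q : ℝ) * α = g - p := by linarith [hpq]
      have : α * ((n : ℝ) * -(q : ℝ)) = (n : ℝ) * (-((q : ℝ) * α)) := by ring
      rw [this, hqα]; ring
    rw [harg, Int.fract_add_intCast]
    have hfng : Int.fract ((n : ℝ) * g) = (n : ℝ) * g := by
      rw [Int.fract_eq_self]
      constructor
      · positivity
      · exact hng1
    have hne : Int.fract ((n : ℝ) * g) ≠ 0 := by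
      rw [hfng]
      have : (0 : ℝ) < (n : ℝ) * g := by
        have : (0 : ℝ) < (n : ℝ) := by exact_mod_cast hn1
        positivity
      linarith
    rw [show -(n : ℝ) * g = -((n : ℝ) * g) by ring, Int.fract_neg hne, hfng]
    constructor
    · linarith
    · have : 1 - (n : ℝ) * g ≤ g := by linarith
      linarith
  · -- q > 0 : N = q.toNat
    refine ⟨q.toNat, ?_⟩
    have hqcast : ((q.toNat : ℝ)) = (q : ℝ) := by
      have h : ((q.toNat : ℤ)) = q := Int.toNat_of_nonneg (by omega)
      exact_mod_cast congrArg (fun x : ℤ => (x : ℝ)) h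
    have : α * (q.toNat : ℝ) = g + ((-p : ℤ) : ℝ) := by
      rw [hqcast]; push_cast; linarith [hpq]
    rw [this, Int.fract_add_intCast, Int.fract_eq_self.mpr ⟨le_of_lt hg0, hg1⟩]
    exact ⟨hg0, hgε⟩

lemma exists_fract_mem (α ρ : ℝ) (hirr : Irrational α) (u v : ℝ)
    (hu : 0 ≤ u) (hv : v ≤ 1) (huv : u < v) :
    ∃ i : ℕ, Int.fract (α * i + ρ) ∈ Set.Ioo u v := by
  obtain ⟨N, hN⟩ := small_step α hirr (v - u) (by linarith)
  obtain ⟨j, hj⟩ := hits ρ (Int.fract (α * N)) u v hu hv hN.1 hN.2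
  refine ⟨j * N, ?_⟩
  have he : α * ((j * N : ℕ) : ℝ) + ρ =
      (ρ + (j : ℝ) * Int.fract (α * N)) + (((j : ℤ) * ⌊α * (N : ℝ)⌋ : ℤ) : ℝ) := by
    unfold Int.fract; push_cast; ring
  rw [he, Int.fract_add_intCast]
  exact hj

set_option maxHeartbeats 1000000 in
/-- A Sturmian word of irrational slope `α` contains an abelian power of period `m`
and exponent `k ≥ 2` iff `‖mα‖ < 1/k`. -/
theorem stmt14 (α ρ : ℝ) (hirr : Irrational α) (h0 : 0 < α) (h1 : α < 1)
    (m k : ℕ) (hm : 0 < m) (hk : 2 ≤ k) :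
    HasAbPow (sturmian α ρ) m k ↔ nearestDist ((m : ℝ) * α) < 1 / (k : ℝ) := by
  have hkR : (0 : ℝ) < (k : ℝ) := by positivity
  set β : ℝ := (m : ℝ) * α with hβ
  have hβirr : Irrational β := hirr.natCast_mul hm.ne'
  set θ : ℝ := Int.fract β with hθ
  have hθ0 : 0 < θ := Int.fract_pos.mpr (hβirr.ne_int ⌊β⌋)
  have hθ1 : θ < 1 := Int.fract_lt_one β
  have hblock : ∀ i j : ℕ, (∑ t ∈ Finset.range m, sturmian α ρ (i + j * m + t))
      = ⌊β⌋ + ⌊Int.fract (α * i + ρ + (j : ℝ) * β) + θ⌋ := by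
    intro i j
    rw [sturmian_block_sum]
    have h1 : α * (((i + j * m : ℕ) : ℝ) + (m : ℕ)) + ρ = (α * i + ρ + (j : ℝ) * β) + β := by
      rw [hβ]; push_cast; ring
    have h2 : α * ((i + j * m : ℕ) : ℝ) + ρ = α * i + ρ + (j : ℝ) * β := by
      rw [hβ]; push_cast; ring
    rw [h1, h2, floor_split]
    rw [← hθ]; ring
  have hblock0 : ∀ i : ℕ, (∑ t ∈ Finset.range m, sturmian α ρ (i + t))
      = ⌊β⌋ + ⌊Int.fract ((α * i + ρ)) + θ⌋ := by
    intro i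
    have := hblock i 0
    simpa using this
  have hrec : ∀ (c : ℝ) (j : ℕ),
      Int.fract (c + ((j : ℝ) + 1) * β) = Int.fract (Int.fract (c + (j : ℝ) * β) + θ) := by
    intro c j
    have h1 : c + ((j : ℝ) + 1) * β = (c + (j : ℝ) * β) + β := by ring
    rw [h1, fract_shift]
    rw [show Int.fract (c + (j : ℝ) * β) + β
        = (Int.fract (c + (j : ℝ) * β) + θ) + ((⌊β⌋ : ℤ) : ℝ) by
      rw [hθ]; unfold Int.fract; ring, Int.fract_add_intCast]
  constructor
  · rintro ⟨i, hi⟩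
    set c : ℝ := α * i + ρ with hc
    set z : ℕ → ℝ := fun j => Int.fract (c + (j : ℝ) * β) with hz
    have hz0 : ∀ j, 0 ≤ z j := fun j => Int.fract_nonneg _
    have hz1 : ∀ j, z j < 1 := fun j => Int.fract_lt_one _
    have hzzero : z 0 = Int.fract c := by simp [hz]
    have heq : ∀ j < k, ⌊z j + θ⌋ = ⌊z 0 + θ⌋ := by
      intro j hj
      have h := hi j hj
      rw [hblock i j, hblock0 i] at h
      rw [← hc] at h
      show ⌊Int.fract (c + (j : ℝ) * β) + θ⌋ = ⌊Int.fract (c + ((0 : ℕ) : ℝ) * β) + θ⌋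
      simp only [Nat.cast_zero, zero_mul, add_zero]
      omega
    have hcase : ⌊z 0 + θ⌋ = 0 ∨ ⌊z 0 + θ⌋ = 1 := by
      have ha : (0 : ℤ) ≤ ⌊z 0 + θ⌋ := Int.le_floor.mpr (by push_cast; linarith [hz0 0])
      have hb : ⌊z 0 + θ⌋ < 2 := Int.floor_lt.mpr (by push_cast; linarith [hz1 0])
      omega
    have hkm1 : ((k - 1 : ℕ) : ℝ) = (k : ℝ) - 1 := by
      push_cast [Nat.cast_sub (by omega : 1 ≤ k)]; ring
    rcases hcase with hc0 | hc1
    · -- all floors zero : θ < 1/k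
      have hlt : ∀ j < k, z j + θ < 1 := by
        intro j hj
        have h := heq j hj
        rw [hc0] at h
        have := Int.lt_floor_add_one (z j + θ)
        rw [h] at this; push_cast at this; linarith
      have hform : ∀ j, j < k → z j = z 0 + (j : ℝ) * θ := by
        intro j
        induction j with
        | zero => intro _; simp
        | succ n ih =>
            intro hj
            have hn : n < k := by omega
            have h1 := ih hn
            have h2 := hlt n hn
            have : z (n + 1) = Int.fract (z n + θ) := by
              rw [hz]; simp only []
              push_cast
              exact hrec c n
            rw [this, Int.fract_eq_self.mpr ⟨by linarith [hz0 n], h2⟩, h1]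
            push_cast; ring
      have hl := hlt (k - 1) (by omega)
      rw [hform (k - 1) (by omega), hkm1] at hl
      have hkθ : (k : ℝ) * θ < 1 := by nlinarith [hz0 0]
      have : θ < 1 / (k : ℝ) := by rw [lt_div_iff₀ hkR]; linarith
      calc nearestDist ((m : ℝ) * α) ≤ θ := min_le_left _ _
        _ < 1 / (k : ℝ) := this
    · -- all floors one : 1 - θ < 1/k
      have hge : ∀ j < k, 1 ≤ z j + θ := by
        intro j hj
        have h := heq j hj
        rw [hc1] at h
        have := Int.floor_le (z j + θ)
        rw [h] at this; push_cast at this; linarith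
      have hform : ∀ j, j < k → z j = z 0 - (j : ℝ) * (1 - θ) := by
        intro j
        induction j with
        | zero => intro _; simp
        | succ n ih =>
            intro hj
            have hn : n < k := by omega
            have h1 := ih hn
            have h2 := hge n hn
            have h3 := hz1 n
            have : z (n + 1) = Int.fract (z n + θ) := by
              rw [hz]; simp only []
              push_cast
              exact hrec c n
            rw [this, show z n + θ = (z n + θ - 1) + ((1 : ℤ) : ℝ) by push_cast; ring,
              Int.fract_add_intCast, Int.fract_eq_self.mpr ⟨by linarith, by linarith⟩, h1]
            push_cast; ring
      have hg := hge (k - 1) (by omega)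
      rw [hform (k - 1) (by omega), hkm1] at hg
      have hk1 : (k : ℝ) * (1 - θ) < 1 := by nlinarith [hz1 0]
      have : 1 - θ < 1 / (k : ℝ) := by rw [lt_div_iff₀ hkR]; linarith
      calc nearestDist ((m : ℝ) * α) ≤ 1 - θ := min_le_right _ _
        _ < 1 / (k : ℝ) := this
  · intro hnd
    rcases min_lt_iff.mp hnd with hsmall | hbig
    · -- θ < 1/k
      have hkθ : (k : ℝ) * θ < 1 := by
        rw [lt_div_iff₀ hkR] at hsmall; linarith
      obtain ⟨i, hi⟩ := exists_fract_mem α ρ hirr 0 (1 - (k : ℝ) * θ)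
        le_rfl (by nlinarith) (by linarith)
      refine ⟨i, ?_⟩
      intro j hj
      set c : ℝ := α * i + ρ with hc
      set z : ℕ → ℝ := fun j => Int.fract (c + (j : ℝ) * β) with hz
      have hzzero : z 0 = Int.fract c := by simp [hz]
      have hz0' : Int.fract c < 1 - (k : ℝ) * θ := hi.2
      have hz0'' : 0 < Int.fract c := hi.1
      have hform : ∀ n, n < k → z n = Int.fract c + (n : ℝ) * θ ∧ z n + θ < 1 := by
        intro n
        induction n with
        | zero =>
            intro _
            constructor
            · simp [hzzero]
            · rw [hzzero]
              have h5 : (1 : ℝ) * θ ≤ (k : ℝ) * θ := by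
                have : (1 : ℝ) ≤ (k : ℝ) := by exact_mod_cast (by omega : 1 ≤ k)
                nlinarith
              linarith
        | succ n ih =>
            intro hjn
            have hn : n < k := by omega
            obtain ⟨h1, h2⟩ := ih hn
            have hrecn : z (n + 1) = Int.fract (z n + θ) := by
              rw [hz]; simp only []; push_cast; exact hrec c n
            have hval : z (n + 1) = Int.fract c + ((n : ℝ) + 1) * θ := by
              rw [hrecn, Int.fract_eq_self.mpr ⟨by linarith [Int.fract_nonneg (c + (n : ℝ) * β), hθ0,
                (Int.fract_nonneg c)], h2⟩, h1]
              have : 0 ≤ z n := Int.fract_nonneg _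
              ring
            constructor
            · rw [hval]; push_cast; ring
            · rw [hval]
              have hnk : (n : ℝ) + 1 ≤ (k : ℝ) - 1 := by
                have : n + 1 ≤ k - 1 := by omega
                have := (Nat.cast_le (α := ℝ)).mpr this
                push_cast [Nat.cast_sub (by omega : 1 ≤ k)] at this
                linarith
              nlinarith
      have hflr : ∀ n, n < k → ⌊z n + θ⌋ = 0 := by
        intro n hn
        obtain ⟨h1, h2⟩ := hform n hn
        rw [Int.floor_eq_zero_iff]
        constructor
        · rw [h1]
          have : (0 : ℝ) ≤ (n : ℝ) * θ := by positivity
          linarith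
        · exact h2
      rw [hblock i j, hblock0 i]
      have e1 : ⌊Int.fract (c + (j : ℝ) * β) + θ⌋ = 0 := hflr j hj
      have e2 : ⌊Int.fract c + θ⌋ = 0 := by
        have h2 := hflr 0 (by omega)
        rw [hzzero] at h2
        exact h2
      rw [hc] at e1 e2
      omega
    · -- 1 - θ < 1/k
      have hkθ : (k : ℝ) * (1 - θ) < 1 := by
        rw [lt_div_iff₀ hkR] at hbig; linarith
      obtain ⟨i, hi⟩ := exists_fract_mem α ρ hirr ((k : ℝ) * (1 - θ)) 1
        (by nlinarith) le_rfl (by linarith)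
      refine ⟨i, ?_⟩
      intro j hj
      set c : ℝ := α * i + ρ with hc
      set z : ℕ → ℝ := fun j => Int.fract (c + (j : ℝ) * β) with hz
      have hzzero : z 0 = Int.fract c := by simp [hz]
      have hz0' : (k : ℝ) * (1 - θ) < Int.fract c := hi.1
      have hz0'' : Int.fract c < 1 := hi.2
      have hform : ∀ n, n < k → z n = Int.fract c - (n : ℝ) * (1 - θ) ∧ 1 ≤ z n + θ ∧ z n < 1 := by
        intro n
        induction n with
        | zero =>
            intro _
            refine ⟨by simp [hzzero], ?_, by rw [hzzero]; exact hz0''⟩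
            rw [hzzero]
            have hk1 : (1 : ℝ) ≤ (k : ℝ) := by exact_mod_cast (by omega : 1 ≤ k)
            nlinarith
        | succ n ih =>
            intro hjn
            have hn : n < k := by omega
            obtain ⟨h1, h2, h3⟩ := ih hn
            have hrecn : z (n + 1) = Int.fract (z n + θ) := by
              rw [hz]; simp only []; push_cast; exact hrec c n
            have hval : z (n + 1) = Int.fract c - ((n : ℝ) + 1) * (1 - θ) := by
              rw [hrecn, show z n + θ = (z n + θ - 1) + ((1 : ℤ) : ℝ) by push_cast; ring,
                Int.fract_add_intCast, Int.fract_eq_self.mpr ⟨by linarith, by linarith⟩, h1]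
              ring
            have hnk1 : (n : ℝ) + 1 + 1 ≤ (k : ℝ) := by
              have : n + 1 + 1 ≤ k := by omega
              exact_mod_cast this
            refine ⟨by rw [hval]; push_cast; ring, ?_, ?_⟩
            · rw [hval]; nlinarith
            · rw [hval]
              have : (0 : ℝ) ≤ ((n : ℝ) + 1) * (1 - θ) := by nlinarith
              linarith
      have hflr : ∀ n, n < k → ⌊z n + θ⌋ = 1 := by
        intro n hn
        obtain ⟨_, h2, h3⟩ := hform n hn
        rw [Int.floor_eq_iff]
        constructor
        · push_cast; linarith
        · push_cast; linarith
      rw [hblock i j, hblock0 i]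
      have e1 : ⌊Int.fract (c + (j : ℝ) * β) + θ⌋ = 1 := hflr j hj
      have e2 : ⌊Int.fract c + θ⌋ = 1 := by
        have h2 := hflr 0 (by omega)
        rw [hzzero] at h2
        exact h2
      rw [hc] at e1 e2
      omega
end

section
/- For every Sturmian word s_α of slope α, the abelian critical exponent satisfies χ_ab(s_α) ≥ √5, and the abelian critical exponent of the Fibonacci word (slope α = φ − 1 = (√5−1)/2) equals √5 exactly. -/
open scoped ENNReal

/-- `k_m`: the maximal exponent of an abelian power of period `m` occurring in `s`. -/
noncomputable def kmax (s : ℕ → ℤ) (m : ℕ) : ℝ≥0∞ :=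
  ⨆ (k : ℕ) (_ : HasAbPow s m k), (k : ℝ≥0∞)

/-- The abelian critical exponent `χ_ab(s) = limsup_{m→∞} k_m / m`. -/
noncomputable def abCritExp (s : ℕ → ℤ) : ℝ≥0∞ :=
  Filter.atTop.limsup (fun m => kmax s m / (m : ℝ≥0∞))

namespace St15

lemma fract_irrational {x : ℝ} (h : Irrational x) : Irrational (Int.fract x) := by
  unfold Int.fract
  exact h.sub_intCast ⌊x⌋

lemma fract_pos {x : ℝ} (h : Irrational x) : 0 < Int.fract x := by
  rcases lt_or_eq_of_le (Int.fract_nonneg x) with h' | h'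
  · exact h'
  · exact absurd ((fract_irrational h).ne_int 0) (by simp [← h'])

lemma floor_add_eq (c B : ℝ) :
    ⌊c + B⌋ = ⌊c⌋ + ⌊B⌋ + if 1 - Int.fract B ≤ Int.fract c then 1 else 0 := by
  have hc0 := Int.fract_nonneg c
  have hc1 := Int.fract_lt_one c
  have hB0 := Int.fract_nonneg B
  have hB1 := Int.fract_lt_one B
  rcases le_or_gt (1 - Int.fract B) (Int.fract c) with h | h
  · rw [if_pos h]
    have key : c + B = (Int.fract c + Int.fract B - 1) + ((⌊c⌋ + ⌊B⌋ + 1 : ℤ) : ℝ) := by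
      rw [Int.fract, Int.fract]; push_cast; ring
    rw [key, Int.floor_add_intCast, Int.floor_eq_zero_iff.mpr ⟨by linarith, by linarith⟩]
    ring
  · rw [if_neg (not_le.mpr h)]
    have key : c + B = (Int.fract c + Int.fract B) + ((⌊c⌋ + ⌊B⌋ : ℤ) : ℝ) := by
      rw [Int.fract, Int.fract]; push_cast; ring
    rw [key, Int.floor_add_intCast, Int.floor_eq_zero_iff.mpr ⟨by linarith, by linarith⟩]
    ring

lemma sum_sturmian (α ρ : ℝ) (p m : ℕ) :
    (∑ t ∈ Finset.range m, sturmian α ρ (p + t)) = ⌊α * ((p : ℝ) + m) + ρ⌋ - ⌊α * p + ρ⌋ := by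
  induction m with
  | zero => simp
  | succ m ih =>
      rw [Finset.sum_range_succ, ih, sturmian]
      have h1 : α * ((p : ℝ) + (m + 1 : ℕ)) + ρ = α * ((p + m : ℕ) + 1) + ρ := by push_cast; ring
      have h2 : α * ((p : ℝ) + m) + ρ = α * ((p + m : ℕ) : ℝ) + ρ := by push_cast; ring
      rw [h1, h2]; ring

lemma block_val (α ρ : ℝ) (p m : ℕ) :
    (∑ t ∈ Finset.range m, sturmian α ρ (p + t))
      = ⌊α * m⌋ + if 1 - Int.fract (α * m) ≤ Int.fract (α * p + ρ) then 1 else 0 := by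
  rw [sum_sturmian]
  have h1 : α * ((p : ℝ) + m) + ρ = (α * p + ρ) + α * m := by ring
  rw [h1, floor_add_eq]; ring

lemma fract_orbit (α ρ : ℝ) (i m j : ℕ) :
    Int.fract (α * ((i : ℝ) + j * m) + ρ)
      = Int.fract (Int.fract (α * i + ρ) + j * Int.fract (α * m)) := by
  have key : α * ((i : ℝ) + j * m) + ρ
      = (Int.fract (α * i + ρ) + j * Int.fract (α * m)) + ((⌊α * i + ρ⌋ + j * ⌊α * m⌋ : ℤ) : ℝ) := by
    rw [Int.fract, Int.fract]; push_cast; ring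
  rw [key, Int.fract_add_intCast]



lemma walk_up {θ y : ℝ} (h0 : 0 < θ) (h1 : θ < 1) (hy0 : 0 ≤ y) (hy1 : y < 1) :
    (∃ j : ℕ, Int.fract (y + j * θ) < θ) ∧ (∃ j : ℕ, 1 - θ ≤ Int.fract (y + j * θ)) := by
  have hex : ∃ j : ℕ, 1 ≤ y + (j + 1 : ℕ) * θ := by
    obtain ⟨n, hn⟩ := exists_nat_ge ((1 - y) / θ)
    refine ⟨n, ?_⟩
    rw [div_le_iff₀ h0] at hn
    push_cast
    nlinarith
  set J := Nat.find hex with hJdef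
  have h2 : 1 ≤ y + (J + 1 : ℕ) * θ := Nat.find_spec hex
  have h3 : y + (J : ℝ) * θ < 1 := by
    rcases Nat.eq_zero_or_pos J with h | h
    · simpa [h] using hy1
    · have hmin := Nat.find_min hex (m := J - 1) (by omega)
      push_neg at hmin
      have hc : ((J - 1 : ℕ) + 1 : ℕ) = J := by omega
      rw [hc] at hmin
      linarith
  push_cast at h2
  constructor
  · refine ⟨J + 1, ?_⟩
    have hv : Int.fract (y + ((J : ℝ) + 1) * θ) = y + ((J : ℝ) + 1) * θ - 1 := by
      have hb : Int.fract (y + ((J : ℝ) + 1) * θ - ((1 : ℤ) : ℝ))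
          = y + ((J : ℝ) + 1) * θ - 1 := by
        rw [Int.fract_eq_self.mpr ⟨by push_cast; linarith, by push_cast; linarith⟩]
        push_cast; ring
      rw [← Int.fract_sub_intCast (y + ((J : ℝ) + 1) * θ) 1]
      exact hb
    push_cast
    rw [hv]
    linarith
  · refine ⟨J, ?_⟩
    rw [Int.fract_eq_self.mpr ⟨by positivity, h3⟩]
    linarith

lemma walk_down {θ y : ℝ} (h0 : 0 < θ) (h1 : θ < 1) (hy0 : 0 ≤ y) (hy1 : y < 1) :
    (∃ j : ℕ, Int.fract (y + j * θ) < 1 - θ) ∧ (∃ j : ℕ, θ ≤ Int.fract (y + j * θ)) := by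
  set η := 1 - θ with hη
  have hη0 : 0 < η := by linarith
  have hη1 : η < 1 := by linarith
  have trans : ∀ j : ℕ, Int.fract (y + j * θ) = Int.fract (y - j * η) := by
    intro j
    have e : y + (j : ℝ) * θ = (y - j * η) + ((j : ℤ) : ℝ) := by
      rw [hη]; push_cast; ring
    rw [e, Int.fract_add_intCast]
  have hex : ∃ j : ℕ, y - (j + 1 : ℕ) * η < 0 := by
    obtain ⟨n, hn⟩ := exists_nat_ge (y / η)
    refine ⟨n, ?_⟩
    rw [div_le_iff₀ hη0] at hn
    push_cast
    nlinarith
  set J := Nat.find hex with hJdef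
  have h2 : y - ((J + 1 : ℕ) : ℝ) * η < 0 := Nat.find_spec hex
  push_cast at h2
  have h3 : 0 ≤ y - (J : ℝ) * η := by
    rcases Nat.eq_zero_or_pos J with h | h
    · simpa [h] using hy0
    · have hmin := Nat.find_min hex (m := J - 1) (by omega)
      push_neg at hmin
      have hc : ((J - 1 : ℕ) + 1 : ℕ) = J := by omega
      rw [hc] at hmin
      push_cast at hmin
      linarith
  constructor
  · refine ⟨J, ?_⟩
    rw [trans J, Int.fract_eq_self.mpr ⟨h3, by linarith⟩]
    linarith
  · refine ⟨J + 1, ?_⟩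
    rw [trans (J + 1)]
    have e : y - ((J + 1 : ℕ) : ℝ) * η = (y - ((J : ℝ) + 1) * η + 1) + ((-1 : ℤ) : ℝ) := by
      push_cast; ring
    rw [e, Int.fract_add_intCast, Int.fract_eq_self.mpr ⟨by linarith, by linarith⟩]
    linarith

lemma exists_good_d (α : ℝ) {ε : ℝ} (hε : 0 < ε) :
    ∃ d : ℕ, 0 < d ∧ (Int.fract (α * d) < ε ∨ 1 - ε < Int.fract (α * d)) := by
  obtain ⟨N, hN⟩ := exists_nat_one_div_lt hε
  have key : ∀ a b : ℕ, a < b → |Int.fract (α * b) - Int.fract (α * a)| < ε →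
      ∃ d : ℕ, 0 < d ∧ (Int.fract (α * d) < ε ∨ 1 - ε < Int.fract (α * d)) := by
    intro a b hab habs
    refine ⟨b - a, by omega, ?_⟩
    set δ := Int.fract (α * b) - Int.fract (α * a) with hδ
    have e : α * ((b - a : ℕ) : ℝ) = δ + ((⌊α * b⌋ - ⌊α * a⌋ : ℤ) : ℝ) := by
      rw [hδ, Int.fract, Int.fract]
      have : ((b - a : ℕ) : ℝ) = (b : ℝ) - a := by
        push_cast [Nat.cast_sub hab.le]; ring
      rw [this]; push_cast; ring
    have habs' : |δ| < ε := habs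
    rw [abs_lt] at habs'
    have hδlt : δ < 1 := by
      have := Int.fract_lt_one (α * b); have := Int.fract_nonneg (α * a); linarith
    have hδgt : -1 < δ := by
      have := Int.fract_lt_one (α * a); have := Int.fract_nonneg (α * b); linarith
    rcases le_or_gt 0 δ with h | h
    · left
      rw [e, Int.fract_add_intCast, Int.fract_eq_self.mpr ⟨h, hδlt⟩]
      exact habs'.2
    · right
      have e2 : δ + ((⌊α * b⌋ - ⌊α * a⌋ : ℤ) : ℝ) = (δ + 1) + ((⌊α * b⌋ - ⌊α * a⌋ - 1 : ℤ) : ℝ) := by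
        push_cast; ring
      rw [e, e2, Int.fract_add_intCast, Int.fract_eq_self.mpr ⟨by linarith, by linarith⟩]
      linarith
  have maps : ∀ n ∈ Finset.range (N + 2),
      ⌊((N : ℝ) + 1) * Int.fract (α * n)⌋ ∈ Finset.Ico (0 : ℤ) (N + 1) := by
    intro n _
    rw [Finset.mem_Ico]
    constructor
    · exact Int.floor_nonneg.mpr (mul_nonneg (by positivity) (Int.fract_nonneg _))
    · rw [Int.floor_lt]
      push_cast
      have h1 : Int.fract (α * n) < 1 := Int.fract_lt_one _
      nlinarith [Int.fract_nonneg (α * n)]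
  have hcard : (Finset.Ico (0 : ℤ) (N + 1)).card < (Finset.range (N + 2)).card := by
    simp
  obtain ⟨a, ha, b, hb, hne, heq⟩ :=
    Finset.exists_ne_map_eq_of_card_lt_of_maps_to hcard maps
  have main : ∀ a b : ℕ, a < b →
      ⌊((N : ℝ) + 1) * Int.fract (α * a)⌋ = ⌊((N : ℝ) + 1) * Int.fract (α * b)⌋ →
      ∃ d : ℕ, 0 < d ∧ (Int.fract (α * d) < ε ∨ 1 - ε < Int.fract (α * d)) := by
    intro a b hab hfe
    apply key a b hab
    have h1 := Int.abs_sub_lt_one_of_floor_eq_floor hfe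
    have hN1 : (0 : ℝ) < (N : ℝ) + 1 := by positivity
    have : |Int.fract (α * b) - Int.fract (α * a)| * ((N : ℝ) + 1) < 1 := by
      have e : ((N : ℝ) + 1) * Int.fract (α * a) - ((N : ℝ) + 1) * Int.fract (α * b)
          = -((Int.fract (α * b) - Int.fract (α * a)) * ((N : ℝ) + 1)) := by ring
      rw [e, abs_neg, abs_mul, abs_of_pos hN1] at h1
      exact h1
    calc |Int.fract (α * b) - Int.fract (α * a)| < 1 / ((N : ℝ) + 1) := by
          rw [lt_div_iff₀ hN1]; linarith
      _ < ε := hN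
  rcases hne.lt_or_gt with h | h
  · exact main a b h heq
  · exact main b a h heq.symm

lemma orbit_hits {α : ℝ} (hα : Irrational α) (ρ : ℝ) {ε : ℝ} (hε : 0 < ε) :
    (∃ i : ℕ, Int.fract (α * i + ρ) < ε) ∧ (∃ i : ℕ, 1 - ε < Int.fract (α * i + ρ)) := by
  set ε' := min ε (1 / 2) with hε'def
  have hε'0 : 0 < ε' := lt_min hε (by norm_num)
  have hε'ε : ε' ≤ ε := min_le_left _ _
  obtain ⟨d, hd, hcase⟩ := exists_good_d α hε'0
  have hθirr : Irrational (α * d) := hα.mul_natCast (by omega)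
  set θ := Int.fract (α * d) with hθdef
  have hθ0 : 0 < θ := fract_pos hθirr
  have hθ1 : θ < 1 := Int.fract_lt_one _
  set y := Int.fract ρ with hydef
  have hy0 : 0 ≤ y := Int.fract_nonneg ρ
  have hy1 : y < 1 := Int.fract_lt_one ρ
  have trans : ∀ j : ℕ, Int.fract (y + j * θ) = Int.fract (α * (d * j : ℕ) + ρ) := by
    intro j
    have e : α * ((d * j : ℕ) : ℝ) + ρ = (y + j * θ) + ((j * ⌊α * d⌋ + ⌊ρ⌋ : ℤ) : ℝ) := by
      rw [hydef, hθdef, Int.fract, Int.fract]; push_cast; ring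
    rw [e, Int.fract_add_intCast]
  rcases hcase with h | h
  · obtain ⟨⟨j1, h1⟩, ⟨j2, h2⟩⟩ := walk_up hθ0 hθ1 hy0 hy1
    rw [trans j1] at h1
    rw [trans j2] at h2
    exact ⟨⟨d * j1, by linarith⟩, ⟨d * j2, by linarith⟩⟩
  · obtain ⟨⟨j1, h1⟩, ⟨j2, h2⟩⟩ := walk_down hθ0 hθ1 hy0 hy1
    rw [trans j1] at h1
    rw [trans j2] at h2
    exact ⟨⟨d * j1, by linarith⟩, ⟨d * j2, by linarith⟩⟩



lemma fract_add_fract (x B : ℝ) :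
    Int.fract (x + B) = Int.fract (Int.fract x + Int.fract B) := by
  have e : x + B = (Int.fract x + Int.fract B) + ((⌊x⌋ + ⌊B⌋ : ℤ) : ℝ) := by
    rw [Int.fract, Int.fract]; push_cast; ring
  rw [e, Int.fract_add_intCast]

lemma hasAbPow_of_lt (α ρ : ℝ) (hα : Irrational α) {m k : ℕ} (hm : m ≠ 0)
    (hk : (k : ℝ) * min (Int.fract (α * m)) (1 - Int.fract (α * m)) < 1) :
    HasAbPow (sturmian α ρ) m k := by
  rcases Nat.eq_zero_or_pos k with hk0 | hk1
  · exact ⟨0, fun j hj => absurd hj (by omega)⟩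
  set β := Int.fract (α * m) with hβdef
  have hirr : Irrational (α * m) := hα.mul_natCast hm
  have hβ0 : 0 < β := fract_pos hirr
  have hβ1 : β < 1 := Int.fract_lt_one _
  have hk1' : (1 : ℝ) ≤ (k : ℝ) := by exact_mod_cast hk1
  suffices h : ∃ i : ℕ, ∀ j < k,
      (if 1 - β ≤ Int.fract (α * ((i : ℝ) + j * m) + ρ) then (1 : ℤ) else 0)
        = if 1 - β ≤ Int.fract (α * i + ρ) then 1 else 0 by
    obtain ⟨i, hi⟩ := h
    refine ⟨i, fun j hj => ?_⟩
    rw [block_val α ρ (i + j * m) m, block_val α ρ i m]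
    have ecast : ((i + j * m : ℕ) : ℝ) = (i : ℝ) + j * m := by push_cast; ring
    rw [ecast, hi j hj]
  rcases le_total β (1 - β) with hc | hc
  · -- upward case: all indicators 0
    rw [min_eq_left hc] at hk
    have hε : (0 : ℝ) < 1 - k * β := by linarith
    obtain ⟨i, hi⟩ := (orbit_hits hα ρ hε).1
    set y := Int.fract (α * i + ρ) with hydef
    have hy0 : 0 ≤ y := Int.fract_nonneg _
    refine ⟨i, fun j hj => ?_⟩
    have hjk : (j : ℝ) + 1 ≤ (k : ℝ) := by exact_mod_cast Nat.succ_le_of_lt hj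
    have hval : Int.fract (α * ((i : ℝ) + j * m) + ρ) = y + j * β := by
      rw [fract_orbit, ← hydef, ← hβdef, Int.fract_eq_self.mpr ⟨by positivity, by nlinarith⟩]
    rw [hval, if_neg (by push_neg; nlinarith), if_neg (by push_neg; nlinarith)]
  · -- downward case: all indicators 1
    rw [min_eq_right hc] at hk
    set γ := 1 - β with hγdef
    have hγ0 : 0 < γ := by rw [hγdef]; linarith
    have hε : (0 : ℝ) < 1 - k * γ := by linarith
    obtain ⟨i, hi⟩ := (orbit_hits hα ρ hε).2
    set y := Int.fract (α * i + ρ) with hydef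
    have hy1 : y < 1 := Int.fract_lt_one _
    have hy : (k : ℝ) * γ < y := by linarith
    refine ⟨i, fun j hj => ?_⟩
    have hjk : (j : ℝ) + 1 ≤ (k : ℝ) := by exact_mod_cast Nat.succ_le_of_lt hj
    have hval : Int.fract (α * ((i : ℝ) + j * m) + ρ) = y - j * γ := by
      rw [fract_orbit, ← hydef, ← hβdef]
      have e : y + (j : ℝ) * β = (y - j * γ) + ((j : ℤ) : ℝ) := by
        rw [hγdef]; push_cast; ring
      rw [e, Int.fract_add_intCast, Int.fract_eq_self.mpr ⟨by nlinarith, by nlinarith⟩]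
    rw [hval, if_pos (by nlinarith), if_pos (by nlinarith)]

lemma k_bound (α ρ : ℝ) (hα : Irrational α) {m k : ℕ} (hm : m ≠ 0)
    (h : HasAbPow (sturmian α ρ) m k) :
    ((k : ℝ) - 1) * min (Int.fract (α * m)) (1 - Int.fract (α * m)) < 1 := by
  set β := Int.fract (α * m) with hβdef
  have hirr : Irrational (α * m) := hα.mul_natCast hm
  have hβ0 : 0 < β := fract_pos hirr
  have hβ1 : β < 1 := Int.fract_lt_one _
  have hmin0 : 0 < min β (1 - β) := lt_min hβ0 (by linarith)
  have hmin1 : min β (1 - β) ≤ β := min_le_left _ _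
  have hmin2 : min β (1 - β) ≤ 1 - β := min_le_right _ _
  rcases Nat.eq_zero_or_pos k with hk0 | hk1
  · subst hk0; push_cast; nlinarith
  have hk1' : (1 : ℝ) ≤ (k : ℝ) := by exact_mod_cast hk1
  obtain ⟨i, hi⟩ := h
  set y : ℕ → ℝ := fun j => Int.fract (α * ((i : ℝ) + j * m) + ρ) with hydef
  have hy0 : ∀ j, 0 ≤ y j := fun j => Int.fract_nonneg _
  have hy1 : ∀ j, y j < 1 := fun j => Int.fract_lt_one _
  have hind : ∀ j < k,
      (if 1 - β ≤ y j then (1 : ℤ) else 0) = if 1 - β ≤ y 0 then 1 else 0 := by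
    intro j hj
    have hsum := hi j hj
    rw [block_val α ρ (i + j * m) m, block_val α ρ i m] at hsum
    have ecast : ((i + j * m : ℕ) : ℝ) = (i : ℝ) + j * m := by push_cast; ring
    rw [ecast] at hsum
    have key := add_left_cancel hsum
    have e0 : y 0 = Int.fract (α * i + ρ) := by
      simp only [hydef, Nat.cast_zero, zero_mul, add_zero]
    have ej : y j = Int.fract (α * ((i : ℝ) + j * m) + ρ) := rfl
    rw [ej, e0]
    exact key
  have step : ∀ j : ℕ, y (j + 1) = Int.fract (y j + β) := by
    intro j
    have e : α * ((i : ℝ) + (j + 1 : ℕ) * m) + ρ = (α * ((i : ℝ) + j * m) + ρ) + α * m := by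
      push_cast; ring
    show Int.fract (α * ((i : ℝ) + (j + 1 : ℕ) * m) + ρ) = _
    rw [e, fract_add_fract]
  rcases le_or_gt (1 - β) (y 0) with hc | hc
  · -- all indicators 1 : downward walk
    have hys : ∀ j < k, 1 - β ≤ y j := by
      intro j hj
      have := hind j hj
      rw [if_pos hc] at this
      by_contra hcon
      rw [if_neg hcon] at this
      simp at this
    have claim : ∀ j, j < k → y j = y 0 - j * (1 - β) := by
      intro j
      induction j with
      | zero => intro _; simp
      | succ j ih =>
          intro hj
          have hjk : j < k := by omega
          have hyj := hys j hjk
          have hvj := ih hjk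
          rw [hvj] at hyj
          have hy10 := hy1 0
          have hjnn : (0 : ℝ) ≤ ((j : ℝ) + 1) * (1 - β) := by nlinarith [Nat.cast_nonneg (α := ℝ) j]
          have hb1 : (0 : ℝ) ≤ y 0 - ((j : ℝ) + 1) * (1 - β) := by linarith
          have hb2 : y 0 - ((j : ℝ) + 1) * (1 - β) < 1 := by linarith
          rw [step j, hvj]
          have e : (y 0 - (j : ℝ) * (1 - β)) + β = (y 0 - ((j : ℝ) + 1) * (1 - β)) + ((1 : ℤ) : ℝ) := by
            push_cast; ring
          rw [e, Int.fract_add_intCast, Int.fract_eq_self.mpr ⟨hb1, hb2⟩]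
          push_cast; ring
    have hlast : y (k - 1) = y 0 - ((k : ℝ) - 1) * (1 - β) := by
      have := claim (k - 1) (by omega)
      rw [this]
      congr 1
      have : ((k - 1 : ℕ) : ℝ) = (k : ℝ) - 1 := by
        have : (1 : ℕ) ≤ k := hk1
        push_cast [Nat.cast_sub this]
        ring
      rw [this]
    have hge := hys (k - 1) (by omega)
    rw [hlast] at hge
    have h1 : ((k : ℝ) - 1) * (1 - β) < 1 := by
      have := hy1 0
      linarith
    calc ((k : ℝ) - 1) * min β (1 - β) ≤ ((k : ℝ) - 1) * (1 - β) := by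
          apply mul_le_mul_of_nonneg_left hmin2 (by linarith)
      _ < 1 := h1
  · -- all indicators 0 : upward walk
    have hys : ∀ j < k, y j < 1 - β := by
      intro j hj
      have := hind j hj
      rw [if_neg (not_le.mpr hc)] at this
      by_contra hcon
      push_neg at hcon
      rw [if_pos hcon] at this
      simp at this
    have claim : ∀ j, j < k → y j = y 0 + j * β := by
      intro j
      induction j with
      | zero => intro _; simp
      | succ j ih =>
          intro hj
          have hjk : j < k := by omega
          have hyj := hys j hjk
          have hvj := ih hjk
          rw [hvj] at hyj
          have hjnn : (0 : ℝ) ≤ (j : ℝ) * β := by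
            have : (0 : ℝ) ≤ (j : ℝ) := Nat.cast_nonneg j
            nlinarith
          have hy00 := hy0 0
          have hb1 : (0 : ℝ) ≤ (y 0 + (j : ℝ) * β) + β := by linarith
          have hb2 : (y 0 + (j : ℝ) * β) + β < 1 := by linarith
          rw [step j, hvj, Int.fract_eq_self.mpr ⟨hb1, hb2⟩]
          push_cast; ring
    have hlast : y (k - 1) = y 0 + ((k : ℝ) - 1) * β := by
      have := claim (k - 1) (by omega)
      rw [this]
      congr 1
      have : ((k - 1 : ℕ) : ℝ) = (k : ℝ) - 1 := by
        have : (1 : ℕ) ≤ k := hk1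
        push_cast [Nat.cast_sub this]
        ring
      rw [this]
    have hlt := hys (k - 1) (by omega)
    rw [hlast] at hlt
    have h1 : ((k : ℝ) - 1) * β < 1 := by
      have := hy0 0
      linarith
    calc ((k : ℝ) - 1) * min β (1 - β) ≤ ((k : ℝ) - 1) * β := by
          apply mul_le_mul_of_nonneg_left hmin1 (by linarith)
      _ < 1 := h1


/-! ### Continued fraction machinery -/

noncomputable def cfX (ξ : ℝ) : ℕ → ℝ
  | 0 => ξ
  | n + 1 => (Int.fract (cfX ξ n))⁻¹

lemma cfX_irrational {ξ : ℝ} (hξ : Irrational ξ) : ∀ n, Irrational (cfX ξ n) := by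
  intro n
  induction n with
  | zero => exact hξ
  | succ n ih => exact (fract_irrational ih).inv

lemma cfX_gt_one {ξ : ℝ} (hξ : Irrational ξ) (n : ℕ) : 1 < cfX ξ (n + 1) := by
  have h0 : 0 < Int.fract (cfX ξ n) := fract_pos (cfX_irrational hξ n)
  have h1 : Int.fract (cfX ξ n) < 1 := Int.fract_lt_one _
  have : cfX ξ (n + 1) = (Int.fract (cfX ξ n))⁻¹ := rfl
  rw [this]
  exact (one_lt_inv₀ h0).mpr h1

noncomputable def cfA (ξ : ℝ) (n : ℕ) : ℤ := ⌊cfX ξ n⌋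

lemma cfA_pos {ξ : ℝ} (hξ : Irrational ξ) (n : ℕ) : 1 ≤ cfA ξ (n + 1) := by
  unfold cfA
  exact Int.le_floor.mpr (by exact_mod_cast (cfX_gt_one hξ n).le)

lemma cfX_recur {ξ : ℝ} (hξ : Irrational ξ) (n : ℕ) :
    cfX ξ n = (cfA ξ n : ℝ) + (cfX ξ (n + 1))⁻¹ := by
  have h0 : 0 < Int.fract (cfX ξ n) := fract_pos (cfX_irrational hξ n)
  have e : cfX ξ (n + 1) = (Int.fract (cfX ξ n))⁻¹ := rfl
  rw [e, inv_inv, Int.fract]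
  unfold cfA
  ring

noncomputable def cfP (ξ : ℝ) : ℕ → ℤ
  | 0 => 1
  | 1 => cfA ξ 0
  | n + 2 => cfA ξ (n + 1) * cfP ξ (n + 1) + cfP ξ n

noncomputable def cfQ (ξ : ℝ) : ℕ → ℤ
  | 0 => 0
  | 1 => 1
  | n + 2 => cfA ξ (n + 1) * cfQ ξ (n + 1) + cfQ ξ n

noncomputable def cfE (ξ : ℝ) (n : ℕ) : ℝ := (cfQ ξ n : ℝ) * ξ - (cfP ξ n : ℝ)

lemma cfE_zero (ξ : ℝ) : cfE ξ 0 = -1 := by simp [cfE, cfP, cfQ]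

lemma cfE_one (ξ : ℝ) : cfE ξ 1 = Int.fract ξ := by
  have h1 : cfQ ξ 1 = 1 := rfl
  have h2 : cfP ξ 1 = ⌊ξ⌋ := rfl
  rw [cfE, h1, h2, Int.fract]
  push_cast
  ring

lemma cfE_recur (ξ : ℝ) (n : ℕ) :
    cfE ξ (n + 2) = (cfA ξ (n + 1) : ℝ) * cfE ξ (n + 1) + cfE ξ n := by
  unfold cfE
  rw [show cfP ξ (n + 2) = cfA ξ (n + 1) * cfP ξ (n + 1) + cfP ξ n from rfl,
      show cfQ ξ (n + 2) = cfA ξ (n + 1) * cfQ ξ (n + 1) + cfQ ξ n from rfl]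
  push_cast
  ring

lemma cfEX {ξ : ℝ} (hξ : Irrational ξ) : ∀ n, cfE ξ (n + 1) * cfX ξ (n + 1) + cfE ξ n = 0 := by
  intro n
  induction n with
  | zero =>
      rw [cfE_zero, cfE_one]
      have h0 : Int.fract ξ ≠ 0 := (fract_pos hξ).ne'
      have e : cfX ξ 1 = (Int.fract ξ)⁻¹ := rfl
      rw [e, mul_inv_cancel₀ h0]
      ring
  | succ n ih =>
      have hX : cfX ξ (n + 1) = (cfA ξ (n + 1) : ℝ) + (cfX ξ (n + 2))⁻¹ := cfX_recur hξ (n + 1)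
      have hXpos : 0 < cfX ξ (n + 2) := lt_trans one_pos (cfX_gt_one hξ (n + 1))
      have hEn : cfE ξ n = -(cfE ξ (n + 1) * cfX ξ (n + 1)) := by linarith
      rw [cfE_recur, hEn, hX]
      field_simp
      ring

lemma cfE_sign {ξ : ℝ} (hξ : Irrational ξ) : ∀ n, 0 < cfE ξ n * (-1 : ℝ) ^ (n + 1) := by
  intro n
  induction n with
  | zero => rw [cfE_zero]; norm_num
  | succ n ih =>
      have hXpos : 0 < cfX ξ (n + 1) := lt_trans one_pos (cfX_gt_one hξ n)
      have hEX := cfEX hξ n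
      have key : cfE ξ (n + 1) * (-1 : ℝ) ^ (n + 2) * cfX ξ (n + 1)
          = cfE ξ n * (-1 : ℝ) ^ (n + 1) := by
        have : cfE ξ (n + 1) * cfX ξ (n + 1) = -cfE ξ n := by linarith
        calc cfE ξ (n + 1) * (-1 : ℝ) ^ (n + 2) * cfX ξ (n + 1)
            = (cfE ξ (n + 1) * cfX ξ (n + 1)) * (-1 : ℝ) ^ (n + 2) := by ring
          _ = (-cfE ξ n) * (-1 : ℝ) ^ (n + 2) := by rw [this]
          _ = cfE ξ n * (-1 : ℝ) ^ (n + 1) := by rw [pow_succ]; ring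
      by_contra hcon
      push_neg at hcon
      have : cfE ξ (n + 1) * (-1 : ℝ) ^ (n + 2) * cfX ξ (n + 1) ≤ 0 :=
        mul_nonpos_of_nonpos_of_nonneg hcon hXpos.le
      rw [key] at this
      linarith

lemma cfE_eq_abs {ξ : ℝ} (hξ : Irrational ξ) (n : ℕ) :
    cfE ξ n = (-1 : ℝ) ^ (n + 1) * |cfE ξ n| := by
  have h := cfE_sign hξ n
  rcases Nat.even_or_odd (n + 1) with he | ho
  · rw [he.neg_one_pow] at h ⊢
    rw [one_mul, abs_of_pos (by linarith)]
  · rw [ho.neg_one_pow] at h ⊢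
    have : cfE ξ n < 0 := by nlinarith
    rw [abs_of_neg this]
    ring

lemma cfDet (ξ : ℝ) : ∀ n, cfQ ξ n * cfP ξ (n + 1) - cfQ ξ (n + 1) * cfP ξ n = (-1) ^ (n + 1) := by
  intro n
  induction n with
  | zero => simp [cfP, cfQ]
  | succ n ih =>
      rw [show cfP ξ (n + 2) = cfA ξ (n + 1) * cfP ξ (n + 1) + cfP ξ n from rfl,
          show cfQ ξ (n + 2) = cfA ξ (n + 1) * cfQ ξ (n + 1) + cfQ ξ n from rfl,
          pow_succ]
      linear_combination (-1 : ℤ) * ih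

lemma cfOne {ξ : ℝ} (hξ : Irrational ξ) (n : ℕ) :
    (cfQ ξ (n + 1) : ℝ) * |cfE ξ n| + (cfQ ξ n : ℝ) * |cfE ξ (n + 1)| = 1 := by
  have hdet : (cfQ ξ (n + 1) : ℝ) * cfE ξ n - (cfQ ξ n : ℝ) * cfE ξ (n + 1)
      = (-1 : ℝ) ^ (n + 1) := by
    have hg := congrArg (fun z : ℤ => (z : ℝ)) (cfDet ξ n)
    push_cast at hg
    unfold cfE
    linarith [hg]
  have en := cfE_eq_abs hξ n
  have en1 := cfE_eq_abs hξ (n + 1)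
  have hpow : (-1 : ℝ) ^ (n + 2) = -(-1 : ℝ) ^ (n + 1) := by rw [pow_succ]; ring
  rw [en, en1, hpow] at hdet
  have hne : ((-1 : ℝ) ^ (n + 1)) ≠ 0 := by
    apply pow_ne_zero; norm_num
  apply mul_left_cancel₀ hne
  rw [mul_one]
  linear_combination hdet

lemma cfQ_nonneg {ξ : ℝ} (hξ : Irrational ξ) : ∀ n, 0 ≤ cfQ ξ n ∧ 0 ≤ cfQ ξ (n + 1) := by
  intro n
  induction n with
  | zero => exact ⟨by simp [cfQ], by simp [cfQ]⟩
  | succ n ih =>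
      refine ⟨ih.2, ?_⟩
      rw [show cfQ ξ (n + 2) = cfA ξ (n + 1) * cfQ ξ (n + 1) + cfQ ξ n from rfl]
      have ha := cfA_pos hξ n
      nlinarith [ih.1, ih.2]

lemma cfQ_pos {ξ : ℝ} (hξ : Irrational ξ) : ∀ n, 1 ≤ cfQ ξ (n + 1) := by
  intro n
  induction n with
  | zero => simp [cfQ]
  | succ n ih =>
      rw [show cfQ ξ (n + 2) = cfA ξ (n + 1) * cfQ ξ (n + 1) + cfQ ξ n from rfl]
      have ha := cfA_pos hξ n
      nlinarith [(cfQ_nonneg hξ n).1]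

lemma cfQ_mono {ξ : ℝ} (hξ : Irrational ξ) {a b : ℕ} (ha : 1 ≤ a) (hab : a ≤ b) :
    cfQ ξ a ≤ cfQ ξ b := by
  induction b, hab using Nat.le_induction with
  | base => exact le_refl _
  | succ b hb ih =>
      refine le_trans ih ?_
      have hb1 : 1 ≤ b := le_trans ha hb
      obtain ⟨c, rfl⟩ : ∃ c, b = c + 1 := ⟨b - 1, by omega⟩
      rw [show cfQ ξ (c + 2) = cfA ξ (c + 1) * cfQ ξ (c + 1) + cfQ ξ c from rfl]
      have ha' := cfA_pos hξ c
      nlinarith [(cfQ_nonneg hξ c).1, cfQ_pos hξ c]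

lemma cfQ_ge {ξ : ℝ} (hξ : Irrational ξ) : ∀ n : ℕ, (n : ℤ) ≤ cfQ ξ (2 * n + 1) := by
  intro n
  induction n with
  | zero => simp [cfQ]
  | succ n ih =>
      have e : 2 * (n + 1) + 1 = (2 * n + 1) + 2 := by ring
      rw [e, show cfQ ξ ((2 * n + 1) + 2)
          = cfA ξ ((2 * n + 1) + 1) * cfQ ξ ((2 * n + 1) + 1) + cfQ ξ (2 * n + 1) from rfl]
      have ha := cfA_pos hξ (2 * n + 1)
      have h1 := cfQ_pos hξ (2 * n + 1)
      push_cast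
      nlinarith

lemma cfT {ξ : ℝ} (hξ : Irrational ξ) (n : ℕ) :
    |cfE ξ (n + 1)| * ((cfQ ξ (n + 1) : ℝ) * cfX ξ (n + 1) + (cfQ ξ n : ℝ)) = 1 := by
  have hEX := cfEX hξ n
  have hXpos : 0 < cfX ξ (n + 1) := lt_trans one_pos (cfX_gt_one hξ n)
  have habs : |cfE ξ n| = |cfE ξ (n + 1)| * cfX ξ (n + 1) := by
    have hEn : cfE ξ n = -(cfE ξ (n + 1) * cfX ξ (n + 1)) := by linarith
    rw [hEn, abs_neg, abs_mul, abs_of_pos hXpos]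
  have hone := cfOne hξ n
  rw [habs] at hone
  linarith [hone]


lemma sqrt5_sq : Real.sqrt 5 ^ 2 = 5 := Real.sq_sqrt (by norm_num)

lemma sqrt5_gt_two : 2 < Real.sqrt 5 := by
  nlinarith [sqrt5_sq, Real.sqrt_nonneg 5]

lemma sqrt5_lt_three : Real.sqrt 5 < 3 := by
  nlinarith [sqrt5_sq, Real.sqrt_nonneg 5]

lemma irrational_sqrt5 : Irrational (Real.sqrt 5) := by
  have : ((5 : ℕ) : ℝ) = (5 : ℝ) := by norm_num
  have h := (Nat.prime_five).irrational_sqrt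
  rwa [this] at h

lemma claim2 {ξ : ℝ} (hξ : Irrational ξ) (n : ℕ)
    (h1 : cfX ξ (n + 1) + (cfQ ξ n : ℝ) / (cfQ ξ (n + 1) : ℝ) ≤ Real.sqrt 5)
    (h2 : cfX ξ (n + 2) + (cfQ ξ (n + 1) : ℝ) / (cfQ ξ (n + 2) : ℝ) ≤ Real.sqrt 5) :
    (Real.sqrt 5 - 1) / 2 < (cfQ ξ (n + 1) : ℝ) / (cfQ ξ (n + 2) : ℝ) := by
  set s5 := Real.sqrt 5 with hs5def
  have hs5sq : s5 ^ 2 = 5 := sqrt5_sq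
  have hs5gt : 2 < s5 := sqrt5_gt_two
  set u : ℝ := cfX ξ (n + 2) with hudef
  set v : ℝ := (cfQ ξ (n + 1) : ℝ) / (cfQ ξ (n + 2) : ℝ) with hvdef
  have hq1 : (1 : ℝ) ≤ (cfQ ξ (n + 1) : ℝ) := by exact_mod_cast cfQ_pos hξ n
  have hq2 : (1 : ℝ) ≤ (cfQ ξ (n + 2) : ℝ) := by exact_mod_cast cfQ_pos hξ (n + 1)
  have hq1p : (0 : ℝ) < (cfQ ξ (n + 1) : ℝ) := by linarith
  have hq2p : (0 : ℝ) < (cfQ ξ (n + 2) : ℝ) := by linarith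
  have hu1 : 1 < u := cfX_gt_one hξ (n + 1)
  have hu0 : 0 < u := by linarith
  have hv0 : 0 < v := div_pos hq1p hq2p
  -- 1/u + 1/v = X(n+1) + Qn/Q(n+1)
  have hrel : u⁻¹ + v⁻¹ = cfX ξ (n + 1) + (cfQ ξ n : ℝ) / (cfQ ξ (n + 1) : ℝ) := by
    have e1 : u⁻¹ = cfX ξ (n + 1) - (cfA ξ (n + 1) : ℝ) := by
      have := cfX_recur hξ (n + 1)
      rw [hudef]; linarith
    have e2 : v⁻¹ = (cfA ξ (n + 1) : ℝ) + (cfQ ξ n : ℝ) / (cfQ ξ (n + 1) : ℝ) := by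
      rw [hvdef, inv_div]
      rw [show cfQ ξ (n + 2) = cfA ξ (n + 1) * cfQ ξ (n + 1) + cfQ ξ n from rfl]
      push_cast
      field_simp
    rw [e1, e2]; ring
  have h1' : u⁻¹ + v⁻¹ ≤ s5 := by rw [hrel]; exact h1
  -- multiply through
  have hA : u + v ≤ s5 * u * v := by
    have := mul_le_mul_of_nonneg_right h1' (le_of_lt (mul_pos hu0 hv0))
    calc u + v = (u⁻¹ + v⁻¹) * (u * v) := by field_simp; ring
      _ ≤ s5 * (u * v) := this
      _ = s5 * u * v := by ring
  have h3 : v ≤ u * (s5 * v - 1) := by nlinarith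
  have hpos : 0 < s5 * v - 1 := by
    by_contra hcon
    push_neg at hcon
    have : u * (s5 * v - 1) ≤ 0 := mul_nonpos_of_nonneg_of_nonpos hu0.le (by linarith)
    linarith
  have hC : v ≤ (s5 - v) * (s5 * v - 1) := by
    have hu2 : u ≤ s5 - v := by linarith
    calc v ≤ u * (s5 * v - 1) := h3
      _ ≤ (s5 - v) * (s5 * v - 1) := mul_le_mul_of_nonneg_right hu2 hpos.le
  have hquad : v ^ 2 - s5 * v + 1 ≤ 0 := by nlinarith
  have hv2 : (2 * v - s5) ^ 2 ≤ 1 := by nlinarith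
  -- strictness via rationality
  have hne : (2 * v - s5) ^ 2 ≠ 1 := by
    intro heq
    have hveq : v ^ 2 + 1 = s5 * v := by nlinarith
    -- v = q1/q2, so s5*(q1*q2) = q1^2+q2^2 : contradiction with irrationality
    have h1v : v * (cfQ ξ (n + 2) : ℝ) = (cfQ ξ (n + 1) : ℝ) := by
      rw [hvdef]; field_simp
    have hkey : s5 * ((cfQ ξ (n + 1) : ℝ) * (cfQ ξ (n + 2) : ℝ))
        = (cfQ ξ (n + 1) : ℝ) ^ 2 + (cfQ ξ (n + 2) : ℝ) ^ 2 := by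
      linear_combination (-((cfQ ξ (n + 2) : ℝ) ^ 2)) * hveq
        + (((cfQ ξ (n + 1) : ℝ) + v * (cfQ ξ (n + 2) : ℝ)) - s5 * (cfQ ξ (n + 2) : ℝ)) * h1v
    have hz1 : (0 : ℤ) < cfQ ξ (n + 1) := lt_of_lt_of_le zero_lt_one (cfQ_pos hξ n)
    have hz2 : (0 : ℤ) < cfQ ξ (n + 2) := lt_of_lt_of_le zero_lt_one (cfQ_pos hξ (n + 1))
    have hzne : (cfQ ξ (n + 1) * cfQ ξ (n + 2) : ℤ) ≠ 0 := ne_of_gt (mul_pos hz1 hz2)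
    have hirr := irrational_sqrt5.mul_intCast hzne
    have hcast : s5 * ((cfQ ξ (n + 1) * cfQ ξ (n + 2) : ℤ) : ℝ)
        = ((cfQ ξ (n + 1) ^ 2 + cfQ ξ (n + 2) ^ 2 : ℤ) : ℝ) := by
      push_cast
      linear_combination hkey
    rw [hs5def] at hcast
    rw [hcast] at hirr
    exact (Int.not_irrational _) hirr
  have hlt : (2 * v - s5) ^ 2 < 1 := lt_of_le_of_ne hv2 hne
  nlinarith [hlt]

lemma exists_good {ξ : ℝ} (hξ : Irrational ξ) (n : ℕ) :
    ∃ i : ℕ, n ≤ i ∧ i ≤ n + 2 ∧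
      Real.sqrt 5 < cfX ξ (i + 1) + (cfQ ξ i : ℝ) / (cfQ ξ (i + 1) : ℝ) := by
  by_contra hcon
  push_neg at hcon
  have h0 := hcon n (le_refl n) (by omega)
  have h1 := hcon (n + 1) (by omega) (by omega)
  have h2 := hcon (n + 2) (by omega) (by omega)
  have hv1 := claim2 hξ n h0 h1
  have hv2 := claim2 hξ (n + 1) h1 h2
  set s5 := Real.sqrt 5 with hs5def
  have hs5sq : s5 ^ 2 = 5 := sqrt5_sq
  have hs5gt : 2 < s5 := sqrt5_gt_two
  set c : ℝ := (s5 - 1) / 2 with hcdef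
  have hc0 : 0 < c := by rw [hcdef]; linarith
  have hcc : c * (1 + c) = 1 := by rw [hcdef]; nlinarith
  have hq1 : (1 : ℝ) ≤ (cfQ ξ (n + 1) : ℝ) := by exact_mod_cast cfQ_pos hξ n
  have hq2 : (1 : ℝ) ≤ (cfQ ξ (n + 2) : ℝ) := by exact_mod_cast cfQ_pos hξ (n + 1)
  have hq3 : (1 : ℝ) ≤ (cfQ ξ (n + 3) : ℝ) := by exact_mod_cast cfQ_pos hξ (n + 2)
  have hq1p : (0 : ℝ) < (cfQ ξ (n + 1) : ℝ) := by linarith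
  have hq2p : (0 : ℝ) < (cfQ ξ (n + 2) : ℝ) := by linarith
  have hq3p : (0 : ℝ) < (cfQ ξ (n + 3) : ℝ) := by linarith
  have ha : (1 : ℝ) ≤ (cfA ξ (n + 2) : ℝ) := by exact_mod_cast cfA_pos hξ (n + 1)
  set v1 : ℝ := (cfQ ξ (n + 1) : ℝ) / (cfQ ξ (n + 2) : ℝ) with hv1def
  set v2 : ℝ := (cfQ ξ (n + 2) : ℝ) / (cfQ ξ (n + 3) : ℝ) with hv2def
  have hrec : (cfQ ξ (n + 3) : ℝ) = (cfA ξ (n + 2) : ℝ) * (cfQ ξ (n + 2) : ℝ) + (cfQ ξ (n + 1) : ℝ) := by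
    rw [show cfQ ξ (n + 3) = cfA ξ (n + 2) * cfQ ξ (n + 2) + cfQ ξ (n + 1) from rfl]
    push_cast
    ring
  have hd3 : (cfA ξ (n + 2) : ℝ) * (cfQ ξ (n + 2) : ℝ) + (cfQ ξ (n + 1) : ℝ) ≠ 0 := by
    nlinarith
  have hprod : v2 * ((cfA ξ (n + 2) : ℝ) + v1) = 1 := by
    rw [hv2def, hv1def, hrec]
    field_simp
  have hgt : 1 < v2 * ((cfA ξ (n + 2) : ℝ) + v1) := by
    have hstep : 1 + c < (cfA ξ (n + 2) : ℝ) + v1 := by linarith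
    have hv2p : 0 < v2 := div_pos hq2p hq3p
    calc (1 : ℝ) = c * (1 + c) := hcc.symm
      _ < v2 * ((cfA ξ (n + 2) : ℝ) + v1) := by nlinarith
  linarith [hprod, hgt]

lemma good_small {ξ : ℝ} (hξ : Irrational ξ) (i : ℕ)
    (hgood : Real.sqrt 5 < cfX ξ (i + 1) + (cfQ ξ i : ℝ) / (cfQ ξ (i + 1) : ℝ)) :
    (cfQ ξ (i + 1) : ℝ) * |cfE ξ (i + 1)| < 1 / Real.sqrt 5 := by
  set s5 := Real.sqrt 5 with hs5def
  have hs5gt : 2 < s5 := sqrt5_gt_two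
  have hs5p : 0 < s5 := by linarith
  set q : ℝ := (cfQ ξ (i + 1) : ℝ) with hqdef
  set q0 : ℝ := (cfQ ξ i : ℝ) with hq0def
  set X : ℝ := cfX ξ (i + 1) with hXdef
  have hq1 : (1 : ℝ) ≤ q := by rw [hqdef]; exact_mod_cast cfQ_pos hξ i
  have hqp : 0 < q := by linarith
  have hq00 : (0 : ℝ) ≤ q0 := by rw [hq0def]; exact_mod_cast (cfQ_nonneg hξ i).1
  have hX1 : 1 < X := cfX_gt_one hξ i
  have hT := cfT hξ i
  rw [← hqdef, ← hq0def, ← hXdef] at hT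
  have hd : 0 < q * X + q0 := by nlinarith
  have hE : |cfE ξ (i + 1)| = (q * X + q0)⁻¹ := by
    field_simp at hT ⊢
    linarith [hT]
  rw [hE]
  have hgood' : s5 * q < q * X + q0 := by
    have h := mul_lt_mul_of_pos_right hgood hqp
    rw [add_mul, div_mul_cancel₀ _ (ne_of_gt hqp)] at h
    nlinarith [h]
  have hfin : q / (q * X + q0) < 1 / s5 := by
    rw [div_lt_div_iff₀ hd hs5p]
    linarith
  rwa [div_eq_mul_inv] at hfin


lemma min_fract_le (x : ℝ) (p : ℤ) :
    min (Int.fract x) (1 - Int.fract x) ≤ |x - p| := by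
  rcases le_or_gt (p : ℝ) (⌊x⌋ : ℝ) with h | h
  · have h1 : Int.fract x ≤ x - p := by
      rw [Int.fract]; linarith
    exact le_trans (min_le_left _ _) (le_trans h1 (le_abs_self _))
  · have hp : (⌊x⌋ : ℝ) + 1 ≤ (p : ℝ) := by
      have h2 : ⌊x⌋ < p := by exact_mod_cast h
      exact_mod_cast h2
    have h1 : 1 - Int.fract x ≤ (p : ℝ) - x := by rw [Int.fract]; linarith
    calc min (Int.fract x) (1 - Int.fract x) ≤ 1 - Int.fract x := min_le_right _ _
      _ ≤ (p : ℝ) - x := h1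
      _ ≤ |x - p| := by rw [abs_sub_comm]; exact le_abs_self _

lemma hurwitz {α : ℝ} (hα : Irrational α) (N : ℕ) :
    ∃ m : ℕ, N ≤ m ∧ 1 ≤ m ∧
      (m : ℝ) * min (Int.fract (α * m)) (1 - Int.fract (α * m)) < 1 / Real.sqrt 5 := by
  obtain ⟨i, hi1, _, hgood⟩ := exists_good hα (2 * N + 1)
  have hsmall := good_small hα i hgood
  set q : ℤ := cfQ α (i + 1) with hqdef
  have hq1 : 1 ≤ q := cfQ_pos hα i
  have hqN : (N : ℤ) ≤ q := by
    have h1 := cfQ_ge hα N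
    have h2 : cfQ α (2 * N + 1) ≤ cfQ α (i + 1) := cfQ_mono hα (by omega) (by omega)
    rw [hqdef]; omega
  refine ⟨q.toNat, by omega, by omega, ?_⟩
  have hcast : ((q.toNat : ℕ) : ℝ) = (q : ℝ) := by
    have h := Int.toNat_of_nonneg (show (0 : ℤ) ≤ q by omega)
    exact_mod_cast congrArg (fun z : ℤ => (z : ℝ)) h
  rw [hcast]
  have hEeq : |cfE α (i + 1)| = |α * (q : ℝ) - (cfP α (i + 1) : ℝ)| := by
    unfold cfE
    rw [← hqdef, mul_comm (q : ℝ) α]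
  rw [hEeq] at hsmall
  have hminle := min_fract_le (α * (q : ℝ)) (cfP α (i + 1))
  have hq0 : (0 : ℝ) ≤ (q : ℝ) := by exact_mod_cast le_trans zero_le_one hq1
  calc (q : ℝ) * min (Int.fract (α * (q : ℝ))) (1 - Int.fract (α * (q : ℝ)))
      ≤ (q : ℝ) * |α * (q : ℝ) - (cfP α (i + 1) : ℝ)| := mul_le_mul_of_nonneg_left hminle hq0
    _ < 1 / Real.sqrt 5 := hsmall

/-! ### Golden ratio lower bound -/

lemma golden_lb (m : ℕ) (hm : m ≠ 0) :
    1 / (Real.sqrt 5 * m + 1 / 2)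
      ≤ min (Int.fract ((Real.sqrt 5 - 1) / 2 * m)) (1 - Int.fract ((Real.sqrt 5 - 1) / 2 * m)) := by
  have hs5sq : Real.sqrt 5 ^ 2 = 5 := sqrt5_sq
  have hs5gt : 2 < Real.sqrt 5 := sqrt5_gt_two
  have hm1 : (1 : ℝ) ≤ (m : ℝ) := by exact_mod_cast Nat.one_le_iff_ne_zero.mpr hm
  set x : ℝ := (Real.sqrt 5 - 1) / 2 * m with hxdef
  set p : ℤ := round x with hpdef
  have hround : |x - p| ≤ 1 / 2 := abs_sub_round x
  -- the quadratic form doesn't vanish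
  have hz : (m ^ 2 - p ^ 2 - p * m : ℤ) ≠ 0 := by
    intro h0
    have hsq : ((2 * p + m) ^ 2 : ℤ) = 5 * m ^ 2 := by linear_combination (-4 : ℤ) * h0
    have h5 : ((2 * p + (m : ℤ) : ℤ) : ℝ) ^ 2 = 5 * (m : ℝ) ^ 2 := by exact_mod_cast congrArg (fun z : ℤ => (z : ℝ)) hsq
    have hfact : (Real.sqrt 5 * m - ((2 * p + (m : ℤ) : ℤ) : ℝ))
        * (Real.sqrt 5 * m + ((2 * p + (m : ℤ) : ℤ) : ℝ)) = 0 := by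
      linear_combination ((m : ℝ) ^ 2) * hs5sq - h5
    have hirr : Irrational (Real.sqrt 5 * m) := irrational_sqrt5.mul_natCast hm
    rcases mul_eq_zero.mp hfact with h | h
    · have : Real.sqrt 5 * m = ((2 * p + (m : ℤ) : ℤ) : ℝ) := by linarith
      rw [this] at hirr
      exact (Int.not_irrational _) hirr
    · have : Real.sqrt 5 * m = ((-(2 * p + (m : ℤ)) : ℤ) : ℝ) := by push_cast at h ⊢; linarith
      rw [this] at hirr
      exact (Int.not_irrational _) hirr
  have habs1 : (1 : ℤ) ≤ |m ^ 2 - p ^ 2 - p * m| := Int.one_le_abs hz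
  have hid : (x - p) * (x + p + m) = ((m ^ 2 - p ^ 2 - p * m : ℤ) : ℝ) := by
    rw [hxdef]
    push_cast
    linear_combination ((m : ℝ) ^ 2 / 4) * hs5sq
  have he : x + p + m = Real.sqrt 5 * m - (x - p) := by
    rw [hxdef]; ring
  have habs2 : |x + (p : ℝ) + m| ≤ Real.sqrt 5 * m + 1 / 2 := by
    rw [he]
    calc |Real.sqrt 5 * m - (x - p)| ≤ |Real.sqrt 5 * m| + |x - p| := abs_sub _ _
      _ ≤ Real.sqrt 5 * m + 1 / 2 := by
          rw [abs_of_nonneg (by positivity)]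
          linarith
  have hprod : 1 ≤ |x - p| * (Real.sqrt 5 * m + 1 / 2) := by
    have c1 : (1 : ℝ) ≤ |((m ^ 2 - p ^ 2 - p * m : ℤ) : ℝ)| := by
      rw [← Int.cast_abs]
      exact_mod_cast habs1
    calc (1 : ℝ) ≤ |((m ^ 2 - p ^ 2 - p * m : ℤ) : ℝ)| := c1
      _ = |x - p| * |x + (p : ℝ) + m| := by rw [← hid, abs_mul]
      _ ≤ |x - p| * (Real.sqrt 5 * m + 1 / 2) :=
          mul_le_mul_of_nonneg_left habs2 (abs_nonneg _)
  have hpos : (0 : ℝ) < Real.sqrt 5 * m + 1 / 2 := by positivity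
  rw [← abs_sub_round_eq_min, ← hpdef]
  rw [div_le_iff₀ hpos]
  linarith


end St15

namespace St15

lemma kmax_lower {s : ℕ → ℤ} {m k : ℕ} (h : HasAbPow s m k) : (k : ℝ≥0∞) ≤ kmax s m :=
  le_iSup₂ (f := fun k (_ : HasAbPow s m k) => (k : ℝ≥0∞)) k h

theorem lower_bound (α ρ : ℝ) (hα : Irrational α) :
    ENNReal.ofReal (Real.sqrt 5) ≤ abCritExp (sturmian α ρ) := by
  have hs5gt := sqrt5_gt_two
  apply ENNReal.le_of_forall_pos_le_add
  intro ε hε _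
  have hεr : (0 : ℝ) < (ε : ℝ) := hε
  have key : ENNReal.ofReal (Real.sqrt 5 - ε) ≤ abCritExp (sturmian α ρ) := by
    apply Filter.le_limsup_of_frequently_le'
    rw [Filter.frequently_atTop]
    intro N
    obtain ⟨m, hmN, hm1, hmlt⟩ := hurwitz hα (max N ⌈(ε : ℝ)⁻¹⌉₊)
    set mv := min (Int.fract (α * m)) (1 - Int.fract (α * m)) with hmvdef
    have hmirr : Irrational (α * m) := hα.mul_natCast (by omega)
    have hmv0 : 0 < mv := lt_min (fract_pos hmirr) (by linarith [Int.fract_lt_one (α * m)])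
    have hmr1 : (1 : ℝ) ≤ (m : ℝ) := by exact_mod_cast hm1
    have hmr0 : (0 : ℝ) < (m : ℝ) := by linarith
    have hs5p : (0 : ℝ) < Real.sqrt 5 := by linarith
    have h2 : mv * (Real.sqrt 5 * m) < 1 := by
      have h3 := mul_lt_mul_of_pos_left hmlt hs5p
      have h4 : Real.sqrt 5 * (1 / Real.sqrt 5) = 1 := by field_simp
      nlinarith [h3]
    have hinv : Real.sqrt 5 * m < 1 / mv := by
      rw [lt_div_iff₀ hmv0]
      nlinarith [h2]
    set k := ⌊(1 / mv)⌋₊ with hkdef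
    have hk_le : (k : ℝ) ≤ 1 / mv := Nat.floor_le (by positivity)
    have hmvirr : Irrational mv := by
      rw [hmvdef]
      rcases min_cases (Int.fract (α * m)) (1 - Int.fract (α * m)) with ⟨he, _⟩ | ⟨he, _⟩
      · rw [he]; exact fract_irrational hmirr
      · rw [he]
        have := (fract_irrational hmirr).intCast_sub 1
        simpa using this
    have hmvinv : Irrational (1 / mv) := by
      rw [one_div]
      exact hmvirr.inv
    have hklt : (k : ℝ) < 1 / mv := by
      rcases lt_or_eq_of_le hk_le with h | h
      · exact h
      · exact absurd h.symm (by exact_mod_cast hmvinv.ne_int (k : ℤ))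
    have hkmul : (k : ℝ) * mv < 1 := (lt_div_iff₀ hmv0).mp hklt
    have hpow := hasAbPow_of_lt α ρ hα (m := m) (k := k) (by omega) hkmul
    have hk_ge : Real.sqrt 5 * m - 1 < (k : ℝ) := by
      have := Nat.lt_floor_add_one (1 / mv)
      rw [← hkdef] at this
      linarith
    refine ⟨m, le_trans (le_max_left _ _) hmN, ?_⟩
    have hmceil : (⌈(ε : ℝ)⁻¹⌉₊ : ℝ) ≤ (m : ℝ) := by
      exact_mod_cast le_trans (le_max_right N _) hmN
    have hmgeps : (ε : ℝ)⁻¹ ≤ (m : ℝ) := le_trans (Nat.le_ceil _) hmceil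
    have hεm : 1 ≤ (ε : ℝ) * m := by
      have h5 := mul_le_mul_of_nonneg_left hmgeps hεr.le
      rw [mul_inv_cancel₀ hεr.ne'] at h5
      linarith
    have hstep1 : Real.sqrt 5 - ε ≤ (k : ℝ) / m := by
      rw [le_div_iff₀ hmr0]
      nlinarith [hk_ge, hεm]
    calc ENNReal.ofReal (Real.sqrt 5 - ε) ≤ ENNReal.ofReal ((k : ℝ) / m) :=
          ENNReal.ofReal_le_ofReal hstep1
      _ = (k : ℝ≥0∞) / (m : ℝ≥0∞) := by
          rw [ENNReal.ofReal_div_of_pos hmr0, ENNReal.ofReal_natCast, ENNReal.ofReal_natCast]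
      _ ≤ kmax (sturmian α ρ) m / (m : ℝ≥0∞) := ENNReal.div_le_div_right (kmax_lower hpow) _
  have hsplit : ENNReal.ofReal (Real.sqrt 5)
      ≤ ENNReal.ofReal (Real.sqrt 5 - ε) + ENNReal.ofReal ε := by
    have h6 := ENNReal.ofReal_add_le (p := Real.sqrt 5 - ε) (q := (ε : ℝ))
    rw [sub_add_cancel] at h6
    exact h6
  calc ENNReal.ofReal (Real.sqrt 5) ≤ ENNReal.ofReal (Real.sqrt 5 - ε) + ENNReal.ofReal ε :=
        hsplit
    _ ≤ abCritExp (sturmian α ρ) + ε := by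
        apply add_le_add key
        rw [ENNReal.ofReal_coe_nnreal]

lemma irrational_golden : Irrational ((Real.sqrt 5 - 1) / 2) := by
  have h1 : Irrational (Real.sqrt 5 - 1) := by simpa using irrational_sqrt5.sub_intCast 1
  have h2 := h1.div_intCast (m := 2) (by norm_num)
  simpa using h2

theorem upper_bound :
    abCritExp (sturmian ((Real.sqrt 5 - 1) / 2) ((Real.sqrt 5 - 1) / 2))
      ≤ ENNReal.ofReal (Real.sqrt 5) := by
  set φ := (Real.sqrt 5 - 1) / 2 with hφdef
  have hφirr : Irrational φ := irrational_golden
  have hs5gt := sqrt5_gt_two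
  unfold abCritExp
  have hle : ∀ᶠ (m : ℕ) in Filter.atTop,
      kmax (sturmian φ φ) m / (m : ℝ≥0∞)
        ≤ ENNReal.ofReal (Real.sqrt 5 + (3 / 2) * (1 / m)) := by
    rw [Filter.eventually_atTop]
    refine ⟨1, fun m hm => ?_⟩
    have hm0 : m ≠ 0 := by omega
    have hmr0 : (0 : ℝ) < (m : ℝ) := by exact_mod_cast hm
    set mv := min (Int.fract (φ * m)) (1 - Int.fract (φ * m)) with hmvdef
    have hD : (0 : ℝ) < Real.sqrt 5 * m + 1 / 2 := by positivity
    have hglb : 1 / (Real.sqrt 5 * m + 1 / 2) ≤ mv := by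
      rw [hmvdef, hφdef]
      exact golden_lb m hm0
    have hmv0 : 0 < mv := lt_of_lt_of_le (by positivity) hglb
    have hinv : 1 / mv ≤ Real.sqrt 5 * m + 1 / 2 := by
      rw [div_le_iff₀ hmv0]
      have h2 := mul_le_mul_of_nonneg_right hglb hD.le
      rw [one_div, inv_mul_cancel₀ hD.ne'] at h2
      nlinarith [h2]
    have hkmax : kmax (sturmian φ φ) m ≤ ENNReal.ofReal (Real.sqrt 5 * m + 3 / 2) := by
      apply iSup₂_le
      intro k hk
      have hb := k_bound φ φ hφirr hm0 hk
      rw [← hmvdef] at hb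
      have h1 : ((k : ℝ) - 1) < 1 / mv := by
        rw [lt_div_iff₀ hmv0]
        exact hb
      have hkr : (k : ℝ) ≤ Real.sqrt 5 * m + 3 / 2 := by linarith
      calc (k : ℝ≥0∞) = ENNReal.ofReal (k : ℝ) := (ENNReal.ofReal_natCast k).symm
        _ ≤ _ := ENNReal.ofReal_le_ofReal hkr
    calc kmax (sturmian φ φ) m / (m : ℝ≥0∞)
        ≤ ENNReal.ofReal (Real.sqrt 5 * m + 3 / 2) / (m : ℝ≥0∞) :=
          ENNReal.div_le_div_right hkmax _
      _ = ENNReal.ofReal ((Real.sqrt 5 * m + 3 / 2) / m) := by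
          rw [ENNReal.ofReal_div_of_pos hmr0, ENNReal.ofReal_natCast]
      _ = ENNReal.ofReal (Real.sqrt 5 + (3 / 2) * (1 / m)) := by
          congr 1
          field_simp
  have htend : Filter.Tendsto (fun m : ℕ => ENNReal.ofReal (Real.sqrt 5 + (3 / 2) * (1 / m)))
      Filter.atTop (nhds (ENNReal.ofReal (Real.sqrt 5))) := by
    apply ENNReal.tendsto_ofReal
    have h0 : Filter.Tendsto (fun m : ℕ => 1 / (m : ℝ)) Filter.atTop (nhds 0) :=
      tendsto_one_div_atTop_nhds_zero_nat
    have h1 := h0.const_mul (3 / 2 : ℝ)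
    have h2 := Filter.Tendsto.const_add (Real.sqrt 5) h1
    simpa using h2
  calc Filter.atTop.limsup (fun m : ℕ => kmax (sturmian φ φ) m / (m : ℝ≥0∞))
      ≤ Filter.atTop.limsup (fun m : ℕ => ENNReal.ofReal (Real.sqrt 5 + (3 / 2) * (1 / m))) :=
        Filter.limsup_le_limsup hle
    _ = ENNReal.ofReal (Real.sqrt 5) := htend.limsup_eq

end St15

/-- The abelian critical exponent of every Sturmian word is at least `√5`, and the
abelian critical exponent of the Fibonacci word (slope `(√5 - 1)/2`) equals `√5`. -/
theorem stmt15 :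
    (∀ α ρ : ℝ, Irrational α → 0 < α → α < 1 →
      ENNReal.ofReal (Real.sqrt 5) ≤ abCritExp (sturmian α ρ)) ∧
    abCritExp (sturmian ((Real.sqrt 5 - 1) / 2) ((Real.sqrt 5 - 1) / 2)) =
      ENNReal.ofReal (Real.sqrt 5) := by
  constructor
  · intro α ρ hα _ _
    exact St15.lower_bound α ρ hα
  · exact le_antisymm St15.upper_bound
      (St15.lower_bound ((Real.sqrt 5 - 1) / 2) ((Real.sqrt 5 - 1) / 2) St15.irrational_golden)
end

section
/- Any two rich words with the same set of palindromic factors are abelian equivalent. -/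
/-- The set of palindromic factors of `w` (including the empty word). -/
def palFactors {α : Type*} (w : List α) : Set (List α) :=
  {v | v <:+: w ∧ v.reverse = v}

/-- A finite word `w` is rich if it contains `|w| + 1` distinct palindromic factors
(including the empty word), the maximal possible number. -/
def Rich {α : Type*} (w : List α) : Prop :=
  (palFactors w).ncard = w.length + 1

set_option linter.unusedSectionVars false

section Aux

variable {α : Type*} [DecidableEq α]

/-- Palindromic factors as a finset. -/
def palFinset (w : List α) : Finset (List α) :=
  w.sublists.toFinset.filter (fun v => v <:+: w ∧ v.reverse = v)

lemma coe_palFinset (w : List α) : (palFinset w : Set (List α)) = palFactors w := by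
  ext v
  simp only [palFinset, Finset.coe_filter, Set.mem_setOf_eq, List.mem_toFinset,
    List.mem_sublists, palFactors]
  exact ⟨fun h => h.2, fun h => ⟨h.1.sublist, h⟩⟩

lemma exists_suffix_take {v w : List α} (h : v <:+: w) :
    ∃ k, k ≤ w.length ∧ v <:+ w.take k := by
  obtain ⟨s, t, rfl⟩ := h
  refine ⟨s.length + v.length, by simp, s, ?_⟩
  rw [List.append_assoc, List.take_length_add_append, List.take_left]

/-- The end position of the first occurrence of `v` in `w`. -/
noncomputable def firstEnd (w v : List α) : ℕ :=
  sInf {k | v <:+ w.take k}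

lemma firstEnd_spec {w v : List α} (h : v <:+: w) : v <:+ w.take (firstEnd w v) := by
  obtain ⟨k, -, hk⟩ := exists_suffix_take h
  have hne : {k | v <:+ w.take k}.Nonempty := ⟨k, hk⟩
  exact Nat.sInf_mem hne

lemma firstEnd_min {w v : List α} (_h : v <:+: w) {k : ℕ} (hk : k < firstEnd w v) :
    ¬ v <:+ w.take k :=
  Nat.notMem_of_lt_sInf hk

lemma firstEnd_le_length {w v : List α} (h : v <:+: w) : firstEnd w v ≤ w.length := by
  obtain ⟨k, hkle, hk⟩ := exists_suffix_take h
  exact le_trans (Nat.sInf_le hk) hkle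

lemma suffix_of_suffix_length_le {u v l : List α} (hu : u <:+ l) (hv : v <:+ l)
    (hlen : u.length ≤ v.length) : u <:+ v := by
  rw [← List.reverse_prefix] at hu hv ⊢
  exact List.prefix_of_prefix_length_le hu hv (by simpa using hlen)

lemma pal_suffix_prefix {u v : List α} (hu : u.reverse = u) (hv : v.reverse = v)
    (h : u <:+ v) : u <+: v := by
  rw [← List.reverse_suffix, hu, hv]
  exact h

lemma firstEnd_injOn (w : List α) : Set.InjOn (firstEnd w) (palFinset w) := by
  have key : ∀ u v : List α, u ∈ palFinset w → v ∈ palFinset w →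
      firstEnd w u = firstEnd w v → u.length ≤ v.length → u = v := by
    intro u v hu hv heq hlen
    simp only [palFinset, Finset.mem_filter] at hu hv
    obtain ⟨-, hui, hup⟩ := hu
    obtain ⟨-, hvi, hvp⟩ := hv
    by_contra hne
    set k := firstEnd w v with hk
    have hsu : u <:+ w.take k := heq ▸ firstEnd_spec hui
    have hsv : v <:+ w.take k := firstEnd_spec hvi
    have huv : u <:+ v := suffix_of_suffix_length_le hsu hsv hlen
    have hpre : u <+: v := pal_suffix_prefix hup hvp huv
    obtain ⟨t, ht⟩ := hpre
    have htne : t ≠ [] := by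
      rintro rfl
      exact hne (by simpa using ht)
    obtain ⟨s, hs⟩ := hsv
    -- w.take k = s ++ v = s ++ u ++ t, so u ends at s.length + u.length < k
    have hkle : k ≤ w.length := firstEnd_le_length hvi
    have hklen : (w.take k).length = k := by
      rw [List.length_take, min_eq_left hkle]
    have hk' : k = s.length + u.length + t.length := by
      rw [← hklen, ← hs, ← ht]; simp [add_assoc]
    have hlt : s.length + u.length < k := by
      rw [hk']
      have : 0 < t.length := List.length_pos_iff.mpr htne
      omega
    have hu' : u <:+ w.take (s.length + u.length) := by
      have : w.take (s.length + u.length) = s ++ u := by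
        have h1 : w.take (s.length + u.length) = (w.take k).take (s.length + u.length) := by
          rw [List.take_take, min_eq_left (le_of_lt hlt)]
        rw [h1, ← hs, ← ht, ← List.append_assoc]
        exact List.take_left' (by simp)
      rw [this]
      exact ⟨s, rfl⟩
    exact firstEnd_min hui (heq ▸ hlt) hu'
  intro u hu v hv heq
  rcases le_total u.length v.length with hlen | hlen
  · exact key u v hu hv heq hlen
  · exact (key v u hv hu heq.symm hlen).symm

lemma getLast?_firstEnd {w v : List α} (hvi : v <:+: w) :
    v.getLast? = (w.take (firstEnd w v)).getLast? := by
  rcases eq_or_ne v [] with rfl | hne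
  · have h0 : firstEnd w [] = 0 := by
      by_contra h
      exact firstEnd_min hvi (Nat.pos_of_ne_zero h) List.nil_suffix
    rw [h0]; simp
  · obtain ⟨s, hs⟩ := firstEnd_spec hvi
    rw [← hs, List.getLast?_append]
    rw [List.getLast?_eq_getLast_of_ne_nil hne]
    simp

lemma image_firstEnd (w : List α) (hw : Rich w) :
    (palFinset w).image (firstEnd w) = Finset.range (w.length + 1) := by
  have hcard : (palFinset w).card = w.length + 1 := by
    have := hw
    rw [Rich, ← coe_palFinset, Set.ncard_coe_finset] at this
    exact this
  apply Finset.eq_of_subset_of_card_le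
  · intro k hk
    simp only [Finset.mem_image] at hk
    obtain ⟨v, hv, rfl⟩ := hk
    simp only [palFinset, Finset.mem_filter] at hv
    exact Finset.mem_range.mpr (Nat.lt_succ_of_le (firstEnd_le_length hv.2.1))
  · rw [Finset.card_range, Finset.card_image_of_injOn (firstEnd_injOn w), hcard]

lemma count_eq_card_filter_range (w : List α) (a : α) :
    w.count a =
      ((Finset.range (w.length + 1)).filter
        (fun k => (w.take k).getLast? = some a)).card := by
  induction w using List.reverseRecOn with
  | nil => simp
  | append_singleton w b ih =>
    rw [List.length_append, List.length_singleton]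
    rw [show w.length + 1 + 1 = (w.length + 1) + 1 from rfl, Finset.range_add_one,
      Finset.filter_insert]
    have hcongr : ∀ k ∈ Finset.range (w.length + 1),
        (((w ++ [b]).take k).getLast? = some a) ↔ ((w.take k).getLast? = some a) := by
      intro k hk
      rw [Finset.mem_range] at hk
      rw [List.take_append_of_le_length (Nat.lt_succ_iff.mp hk)]
    rw [Finset.filter_congr hcongr, List.count_append]
    have htake : (w ++ [b]).take (w.length + 1) = w ++ [b] := by
      apply List.take_of_length_le; simp
    by_cases hb : b = a
    · subst hb
      rw [if_pos (by rw [htake]; simp), Finset.card_insert_of_notMem (by simp), ← ih]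
      simp
    · rw [if_neg (by rw [htake]; simp [hb]), ← ih]
      simp [List.count_singleton, if_neg (by simpa using hb)]

lemma count_eq_card_pal (w : List α) (hw : Rich w) (a : α) :
    w.count a = ((palFinset w).filter (fun v => v.getLast? = some a)).card := by
  have h1 : (palFinset w).filter (fun v => v.getLast? = some a)
      = (palFinset w).filter (fun v => (w.take (firstEnd w v)).getLast? = some a) := by
    apply Finset.filter_congr
    intro v hv
    simp only [palFinset, Finset.mem_filter] at hv
    rw [getLast?_firstEnd hv.2.1]
  rw [h1, count_eq_card_filter_range, ← image_firstEnd w hw, Finset.filter_image]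
  exact Finset.card_image_of_injOn ((firstEnd_injOn w).mono
    (Finset.coe_subset.mpr (Finset.filter_subset
      (fun v => (w.take (firstEnd w v)).getLast? = some a) (palFinset w))))

end Aux

/-- Any two rich words with the same set of palindromic factors are abelian
equivalent. -/
theorem stmt18 {α : Type*} [DecidableEq α] (w w' : List α)
    (hw : Rich w) (hw' : Rich w') (h : palFactors w = palFactors w') :
    ∀ a, w.count a = w'.count a := by
  intro a
  have hfin : palFinset w = palFinset w' := by
    apply Finset.coe_injective
    rw [coe_palFinset, coe_palFinset, h]
  rw [count_eq_card_pal w hw a, count_eq_card_pal w' hw' a, hfin]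
end

section
/- For every k ≥ 1 and every word u, if u' is obtained from u by a k-switching, then u and u' are k-abelian equivalent, i.e., they have the same prefix of length k−1, the same suffix of length k−1, and the same number of occurrences of every factor of length k. -/
/-- `seg u p q` is the factor `u[p, q)` of `u`. -/
def seg {α : Type*} (u : List α) (p q : ℕ) : List α :=
  (u.take q).drop p

/-- The number of occurrences of `t` as a factor of `w`. -/
def countFactor {α : Type*} [DecidableEq α] (t w : List α) : ℕ :=
  (List.range (w.length + 1)).countP (fun p => decide ((w.drop p).take t.length = t))

namespace Stmt19Aux

set_option linter.unusedSectionVars false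

variable {α : Type*} [DecidableEq α]

/-- occurrences of `t` in `x ++ y` starting strictly inside `x`. -/
def fcount (t x y : List α) : ℕ :=
  (List.range x.length).countP (fun p => decide (((x ++ y).drop p).take t.length = t))

lemma countFactor_append (t x y : List α) :
    countFactor t (x ++ y) = fcount t x y + countFactor t y := by
  unfold countFactor fcount
  rw [List.length_append, Nat.add_assoc, List.range_add, List.countP_append]
  congr 1
  rw [List.countP_map]
  apply List.countP_congr
  intro p _
  simp only [Function.comp_apply, List.drop_length_add_append]

lemma take_append_congr {K : ℕ} (x : List α) {y z : List α} (h : y.take K = z.take K) :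
    (x ++ y).take K = (x ++ z).take K := by
  rw [List.take_append, List.take_append]
  have hy : y.take (K - x.length) = (y.take K).take (K - x.length) := by
    rw [List.take_take, Nat.min_eq_left (Nat.sub_le _ _)]
  have hz : z.take (K - x.length) = (z.take K).take (K - x.length) := by
    rw [List.take_take, Nat.min_eq_left (Nat.sub_le _ _)]
  rw [hy, hz, h]

lemma fcount_congr (K : ℕ) (t x : List α) {y z : List α} (ht : t.length = K + 1)
    (h : y.take K = z.take K) : fcount t x y = fcount t x z := by
  unfold fcount
  apply List.countP_congr
  intro p hp
  rw [List.mem_range] at hp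
  have key : ∀ w : List α, w.take K = y.take K →
      ((x ++ w).drop p).take t.length = (x.drop p ++ y.take K).take t.length := by
    intro w hw
    rw [List.drop_append, Nat.sub_eq_zero_of_le hp.le, List.drop_zero,
      List.take_append, List.take_append]
    congr 1
    have hlen : t.length - (x.drop p).length ≤ K := by
      rw [ht, List.length_drop]; omega
    rw [show w.take (t.length - (x.drop p).length)
        = (w.take K).take (t.length - (x.drop p).length) by
      rw [List.take_take, Nat.min_eq_left hlen], hw,
      List.take_take, Nat.min_eq_left hlen]
  rw [key y rfl, key z h.symm]

lemma drop_eq_seg_append (u : List α) {p q : ℕ} (hpq : p ≤ q) :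
    u.drop p = seg u p q ++ u.drop q := by
  unfold seg
  conv_lhs => rw [← List.take_append_drop q u]
  rw [List.drop_append]
  congr 1
  rcases le_or_gt p (u.take q).length with h | h
  · rw [Nat.sub_eq_zero_of_le h, List.drop_zero]
  · have : u.length ≤ q := by
      rw [List.length_take] at h; omega
    simp [List.drop_eq_nil_of_le this]

end Stmt19Aux

open Stmt19Aux

/-- A `k`-switching preserves `k`-abelian equivalence: if positions
`i < j ≤ l < m` (with `m + (k-1) ≤ |u|`) satisfy `u[i, i+k-1) = u[l, l+k-1)` and
`u[j, j+k-1) = u[m, m+k-1)`, then the word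
`u' = u[0,i) · u[l,m) · u[j,l) · u[i,j) · u[m..]` has the same prefix of length
`k-1`, the same suffix of length `k-1`, and the same number of occurrences of every
factor of length `k` as `u`. -/
theorem stmt19 {α : Type*} [DecidableEq α] (k : ℕ) (hk : 1 ≤ k) (u : List α)
    (i j l m : ℕ) (hij : i < j) (hjl : j ≤ l) (hlm : l < m)
    (hm : m + (k - 1) ≤ u.length)
    (h1 : (u.drop i).take (k - 1) = (u.drop l).take (k - 1))
    (h2 : (u.drop j).take (k - 1) = (u.drop m).take (k - 1)) :
    let u' := u.take i ++ seg u l m ++ seg u j l ++ seg u i j ++ u.drop m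
    u'.take (k - 1) = u.take (k - 1) ∧
    u'.drop (u'.length - (k - 1)) = u.drop (u.length - (k - 1)) ∧
    ∀ t : List α, t.length = k → countFactor t u' = countFactor t u := by
  intro u'
  set K := k - 1 with hK
  set A := u.take i with hA
  set B := seg u i j with hB
  set M := seg u j l with hM
  set C := seg u l m with hC
  set D := u.drop m with hD
  -- decompositions of tails of u
  have hdi : u.drop i = B ++ u.drop j := drop_eq_seg_append u hij.le
  have hdj : u.drop j = M ++ u.drop l := drop_eq_seg_append u hjl
  have hdl : u.drop l = C ++ D := drop_eq_seg_append u hlm.le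
  have hu : u = A ++ (B ++ (M ++ (C ++ D))) := by
    have h0 : u.drop 0 = seg u 0 i ++ u.drop i := drop_eq_seg_append u (Nat.zero_le i)
    have hseg0 : seg u 0 i = A := by simp [seg, hA]
    rw [List.drop_zero, hseg0] at h0
    rw [hdl] at hdj; rw [hdj] at hdi
    rw [hdi] at h0
    simpa using h0
  have hu' : u' = A ++ (C ++ (M ++ (B ++ D))) := by
    show A ++ C ++ M ++ B ++ D = _
    simp [List.append_assoc]
  -- the overlap facts
  have h1' : (B ++ (M ++ (C ++ D))).take K = (C ++ D).take K := by
    rw [← hdl, ← hdj, ← hdi]; exact h1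
  have h2' : (M ++ (C ++ D)).take K = D.take K := by
    rw [← hdl, ← hdj]; exact h2
  have P2 : (B ++ D).take K = (C ++ D).take K := by
    rw [← h1']
    exact take_append_congr B h2'.symm
  have P1 : (M ++ (B ++ D)).take K = D.take K := by
    rw [take_append_congr M P2]; exact h2'
  have P4 : (C ++ (M ++ (B ++ D))).take K = (B ++ (M ++ (C ++ D))).take K := by
    rw [take_append_congr C P1, h1']
  refine ⟨?_, ?_, ?_⟩
  · -- prefix
    have := take_append_congr (K := K) A P4
    rw [← hu', ← hu] at this
    have hKK : K ≤ i + K := Nat.le_add_left _ _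
    calc u'.take K = (u'.take K).take K := by rw [List.take_take, Nat.min_self]
      _ = (u.take K).take K := by rw [this]
      _ = u.take K := by rw [List.take_take, Nat.min_self]
  · -- suffix
    have hmlen : m ≤ u.length := le_trans (Nat.le_add_right _ _) hm
    have hDlen : D.length = u.length - m := by rw [hD, List.length_drop]
    have hlen' : u'.length = u.length := by
      rw [hu']
      conv_rhs => rw [hu]
      simp only [List.length_append]
      omega
    have hQlen : (A ++ C ++ M ++ B).length = m := by
      have h5 : u.length = (A ++ (B ++ (M ++ (C ++ D)))).length := by rw [← hu]
      simp only [List.length_append] at h5 ⊢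
      omega
    have hQ : u' = (A ++ C ++ M ++ B) ++ D := by
      show A ++ C ++ M ++ B ++ D = _; rfl
    rw [hlen', hQ]
    have hmK : m ≤ u.length - K := by omega
    rw [show u.length - K = (A ++ C ++ M ++ B).length + (u.length - K - m) by rw [hQlen]; omega,
      List.drop_length_add_append, hD, List.drop_drop]
    congr 1
    omega
  · -- counts
    intro t ht
    have ht' : t.length = K + 1 := by omega
    rw [hu', hu]
    rw [countFactor_append, countFactor_append, countFactor_append, countFactor_append,
        countFactor_append, countFactor_append, countFactor_append, countFactor_append]
    rw [fcount_congr K t A ht' P4,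
        fcount_congr K t C ht' P1,
        fcount_congr K t M ht' P2,
        fcount_congr K t B ht' h2'.symm]
    omega
end
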